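/- arXiv:2005.12915 — 8 statements merged into one kernel-verified Lean document; each statement's English description precedes it below -/
import Mathlib

section
/- For every natural number m ≥ 1, the proportional choice number of the star K_{1,m} equals 1 + ⌈m/2⌉. -/
open Finset SimpleGraph

/-- `L` is a `k`-assignment: every vertex gets a list (finset) of exactly `k` colors. -/
def IsKAssignment {V : Type*} (L : V → Finset ℕ) (k : ℕ) : Prop :=
  ∀ v, (L v).card = k

/-- The multiplicity `η_L(c)`: the number of vertices whose list contains `c`. -/
def mult {V : Type*} [Fintype V] (L : V → Finset ℕ) (c : ℕ) : ℕ :=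
  (Finset.univ.filter (fun v => c ∈ L v)).card

/-- The palette of a list assignment: the union of all the lists. -/
def palette {V : Type*} [Fintype V] (L : V → Finset ℕ) : Finset ℕ :=
  Finset.univ.biUnion L

/-- A proper `L`-coloring: each vertex is colored from its list, and adjacent
vertices get different colors. -/
def IsProperListColoring {V : Type*} (G : SimpleGraph V) (L : V → Finset ℕ)
    (f : V → ℕ) : Prop :=
  (∀ v, f v ∈ L v) ∧ ∀ ⦃u w⦄, G.Adj u w → f u ≠ f w

/-- A proportional `L`-coloring: a proper `L`-coloring such that each color `c` in
the palette is used `⌊η(c)/k⌋` or `⌈η(c)/k⌉` times. -/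
def IsProportionalColoring {V : Type*} [Fintype V] (G : SimpleGraph V)
    (L : V → Finset ℕ) (k : ℕ) (f : V → ℕ) : Prop :=
  IsProperListColoring G L f ∧
    ∀ c ∈ palette L,
      (Finset.univ.filter (fun v => f v = c)).card = mult L c / k ∨
      (Finset.univ.filter (fun v => f v = c)).card = (mult L c + k - 1) / k

/-- `G` is proportionally `k`-choosable. -/
def ProportionallyChoosable {V : Type*} [Fintype V] (G : SimpleGraph V) (k : ℕ) : Prop :=
  ∀ L : V → Finset ℕ, IsKAssignment L k → ∃ f, IsProportionalColoring G L k f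

/-- The proportional choice number `χ_pc(G)`. -/
noncomputable def propChoiceNumber {V : Type*} [Fintype V] (G : SimpleGraph V) : ℕ :=
  sInf {k | ProportionallyChoosable G k}

/-- An equitable `k`-coloring exists: a proper coloring with `k` (possibly empty)
color classes whose sizes pairwise differ by at most one. -/
def EquitablyColorable {V : Type*} [Fintype V] (G : SimpleGraph V) (k : ℕ) : Prop :=
  ∃ f : V → Fin k, (∀ ⦃u w⦄, G.Adj u w → f u ≠ f w) ∧
    ∀ c c' : Fin k,
      (Finset.univ.filter (fun v => f v = c)).card ≤
        (Finset.univ.filter (fun v => f v = c')).card + 1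

/-- The complete bipartite graph `K_{n,m}`. -/
abbrev KBip (n m : ℕ) : SimpleGraph (Fin n ⊕ Fin m) :=
  completeBipartiteGraph (Fin n) (Fin m)

namespace Stmt2Aux
variable {m k : ℕ}
variable {m k : ℕ}
def lmult (L : Fin 1 ⊕ Fin m → Finset ℕ) (c : ℕ) : ℕ :=
  (Finset.univ.filter fun w : Fin m => c ∈ L (Sum.inr w)).card

def capa (k : ℕ) (L : Fin 1 ⊕ Fin m → Finset ℕ) (c : ℕ) : ℕ :=
  if k + 1 ≤ mult L c then 2 else 1

lemma mult_eq (L : Fin 1 ⊕ Fin m → Finset ℕ) (c : ℕ) :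
    mult L c = (if c ∈ L (Sum.inl 0) then 1 else 0) + lmult L c := by
  classical
  rw [mult, lmult, Finset.card_filter, Finset.card_filter, Fintype.sum_sum_type]
  rw [Fin.sum_univ_one]

lemma sum_lmult (L : Fin 1 ⊕ Fin m → Finset ℕ) (A : Finset ℕ) :
    ∑ c ∈ A, lmult L c = ∑ w : Fin m, ((L (Sum.inr w)) ∩ A).card := by
  classical
  simp only [lmult, Finset.card_filter]
  rw [Finset.sum_comm]
  congr 1; ext w
  rw [← Finset.card_filter, Finset.filter_mem_eq_inter, Finset.inter_comm]

lemma card_le_lmult (L : Fin 1 ⊕ Fin m → Finset ℕ) (c : ℕ) (S : Finset (Fin m)) :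
    (S.filter fun w => c ∈ L (Sum.inr w)).card ≤ lmult L c :=
  Finset.card_le_card (Finset.filter_subset_filter _ (Finset.subset_univ S))

lemma mult_le (L : Fin 1 ⊕ Fin m → Finset ℕ) (c : ℕ) : mult L c ≤ 1 + m := by
  have := Finset.card_filter_le (Finset.univ : Finset (Fin 1 ⊕ Fin m)) (fun v => c ∈ L v)
  simpa [mult] using this

/-- Hall condition for saturating the leaves: M1 -/
lemma M1 (L : Fin 1 ⊕ Fin m → Finset ℕ) (a : ℕ) (hL : IsKAssignment L k)
    (hk2 : 2 ≤ k) (hm2k : m + 2 ≤ 2 * k)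
    (ha : a ∈ L (Sum.inl 0)) (hamin : ∀ b ∈ L (Sum.inl 0), mult L a ≤ mult L b)
    (S : Finset (Fin m)) :
    S.card ≤ ∑ c ∈ S.biUnion (fun w => (L (Sum.inr w)).erase a), capa k L c := by
  classical
  set U := S.biUnion (fun w => (L (Sum.inr w)).erase a) with hU
  set ta := (S.filter fun w => a ∈ L (Sum.inr w)).card with hta
  -- erase card identity
  have herase : ∀ w : Fin m, ((L (Sum.inr w)).erase a).card
      + (if a ∈ L (Sum.inr w) then 1 else 0) = k := by
    intro w
    by_cases h : a ∈ L (Sum.inr w)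
    · rw [if_pos h, Finset.card_erase_of_mem h, hL]
      omega
    · rw [if_neg h, Finset.erase_eq_of_notMem h, hL]
      omega
  have hid : (∑ w ∈ S, ((L (Sum.inr w)).erase a).card) + ta = S.card * k := by
    rw [hta, Finset.card_filter, ← Finset.sum_add_distrib]
    rw [Finset.sum_congr rfl (fun w _ => herase w), Finset.sum_const, smul_eq_mul]
  -- the S-incidence lower bound
  have hsum1 : ∑ w ∈ S, ((L (Sum.inr w)).erase a).card ≤ ∑ c ∈ U, lmult L c := by
    calc ∑ w ∈ S, ((L (Sum.inr w)).erase a).card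
        ≤ ∑ w ∈ S, (U ∩ L (Sum.inr w)).card := by
          apply Finset.sum_le_sum
          intro w hw
          apply Finset.card_le_card
          intro c hc
          exact Finset.mem_inter.mpr ⟨Finset.mem_biUnion.mpr ⟨w, hw, hc⟩,
            Finset.mem_of_mem_erase hc⟩
      _ = ∑ c ∈ U, (S.filter fun w => c ∈ L (Sum.inr w)).card := by
          simp only [Finset.card_filter, ← Finset.filter_mem_eq_inter, Finset.card_filter]
          exact Finset.sum_comm
      _ ≤ ∑ c ∈ U, lmult L c := Finset.sum_le_sum fun c _ => card_le_lmult L c S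
  have key1 : S.card * k ≤ (∑ c ∈ U, lmult L c) + ta := by omega
  by_cases hcase : ta + 1 ≤ k
  · -- easy case
    have hmc : ∀ c ∈ U, lmult L c ≤ k * capa k L c := by
      intro c _
      rw [capa]
      by_cases h : k + 1 ≤ mult L c
      · rw [if_pos h]
        have h1 : lmult L c ≤ mult L c := by rw [mult_eq]; omega
        have := mult_le L c
        omega
      · rw [if_neg h, Nat.mul_one]
        have h1 : lmult L c ≤ mult L c := by rw [mult_eq]; omega
        omega
    have h2 : ∑ c ∈ U, lmult L c ≤ k * ∑ c ∈ U, capa k L c := by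
      rw [Finset.mul_sum]
      exact Finset.sum_le_sum hmc
    have h3 : S.card * k < k * ((∑ c ∈ U, capa k L c) + 1) := by
      rw [Nat.mul_add, Nat.mul_one]
      omega
    rw [Nat.mul_comm] at h3
    exact Nat.lt_succ_iff.mp (Nat.lt_of_mul_lt_mul_left h3)
  · -- hard case : many leaves of S contain a
    by_contra hcon
    push_neg at hcon
    have hcon' : (∑ c ∈ U, capa k L c) + 1 ≤ S.card := hcon
    have hSpos : 0 < S.card := by omega
    obtain ⟨w₀, hw₀⟩ := Finset.card_pos.mp hSpos
    have hUk : k ≤ U.card + 1 := by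
      have hsub : (L (Sum.inr w₀)).erase a ⊆ U :=
        fun c hc => Finset.mem_biUnion.mpr ⟨w₀, hw₀, hc⟩
      have := Finset.card_le_card hsub
      have h2 := herase w₀
      split_ifs at h2 <;> omega
    have htas : ta ≤ S.card := Finset.card_filter_le _ _
    have hSm : S.card ≤ m := by
      calc S.card ≤ (Finset.univ : Finset (Fin m)).card := Finset.card_le_card (Finset.subset_univ S)
        _ = m := by simp
    have hmulta : k + 1 ≤ mult L a := by
      have h1 : ta ≤ lmult L a := by
        rw [hta]; exact card_le_lmult L a S
      rw [mult_eq, if_pos ha]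
      omega
    have hhuge : ∀ b ∈ L (Sum.inl 0), k + 1 ≤ mult L b :=
      fun b hb => le_trans hmulta (hamin b hb)
    set X := U.filter (fun c => k + 1 ≤ mult L c) with hX
    have hcapa : ∑ c ∈ U, capa k L c = U.card + X.card := by
      have hceq : ∀ c ∈ U, capa k L c = 1 + (if k + 1 ≤ mult L c then 1 else 0) := by
        intro c _
        rw [capa]
        split_ifs <;> omega
      rw [Finset.sum_congr rfl hceq, Finset.sum_add_distrib, hX, Finset.card_filter]
      simp
    have hxk : X.card + k ≤ S.card := by omega
    set Y := (L (Sum.inl 0)) \ U with hY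
    have hLuU : (L (Sum.inl 0) ∩ U) ⊆ X := by
      intro c hc
      rcases Finset.mem_inter.mp hc with ⟨h1, h2⟩
      exact Finset.mem_filter.mpr ⟨h2, hhuge c h1⟩
    have hYX : k ≤ Y.card + X.card := by
      have h1 : (L (Sum.inl 0) ∩ U).card + Y.card = k := by
        rw [hY, Finset.card_inter_add_card_sdiff, hL]
      have h2 : (L (Sum.inl 0) ∩ U).card ≤ X.card := Finset.card_le_card hLuU
      omega
    have hlk : ∀ c ∈ Y, k ≤ lmult L c := by
      intro c hc
      have h1 : c ∈ L (Sum.inl 0) := (Finset.mem_sdiff.mp hc).1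
      have h2 := hhuge c h1
      rw [mult_eq, if_pos h1] at h2
      omega
    have hglob : ∑ c ∈ U ∪ Y, lmult L c ≤ m * k := by
      rw [sum_lmult]
      calc ∑ w : Fin m, ((L (Sum.inr w)) ∩ (U ∪ Y)).card
          ≤ ∑ w : Fin m, k := by
            apply Finset.sum_le_sum
            intro w _
            calc ((L (Sum.inr w)) ∩ (U ∪ Y)).card ≤ (L (Sum.inr w)).card :=
                  Finset.card_le_card Finset.inter_subset_left
              _ = k := hL _
        _ = m * k := by simp [Finset.sum_const, mul_comm]
    have hsplit : ∑ c ∈ U ∪ Y, lmult L c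
        = (∑ c ∈ U, lmult L c) + ∑ c ∈ Y, lmult L c := by
      apply Finset.sum_union
      exact Finset.disjoint_sdiff
    have hYsum : Y.card * k ≤ ∑ c ∈ Y, lmult L c := by
      have := Finset.card_nsmul_le_sum Y (lmult L) k hlk
      simpa [smul_eq_mul] using this
    -- combine everything
    have big : S.card * k + Y.card * k ≤ m * k + m := by
      have : S.card * k ≤ (∑ c ∈ U, lmult L c) + m := by omega
      omega
    have f1 : (X.card + k) * k ≤ S.card * k := Nat.mul_le_mul_right _ hxk
    have f2 : k * k ≤ (Y.card + X.card) * k := Nat.mul_le_mul_right _ hYX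
    have key : 2 * (k * k) ≤ m * k + m := by
      rw [Nat.add_mul] at f1 f2
      linarith
    nlinarith [key, hm2k, hk2]


lemma sum_mult (L : Fin 1 ⊕ Fin m → Finset ℕ) (A : Finset ℕ) :
    ∑ c ∈ A, mult L c
      = (L (Sum.inl 0) ∩ A).card + ∑ w : Fin m, ((L (Sum.inr w)) ∩ A).card := by
  classical
  simp only [mult_eq, Finset.sum_add_distrib, ← sum_lmult]
  congr 1
  rw [← Finset.card_filter, Finset.filter_mem_eq_inter, Finset.inter_comm]



/-- Hall condition for covering the demanded colors. -/
lemma M2 (L : Fin 1 ⊕ Fin m → Finset ℕ) (a : ℕ) (hL : IsKAssignment L k) (hk : 1 ≤ k)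
    (ha : a ∈ L (Sum.inl 0)) (T : Finset ℕ) (hTa : a ∉ T)
    (h1 : k * T.card ≤ ∑ c ∈ T, mult L c) :
    T.card ≤ (Finset.univ.filter fun w : Fin m => ∃ c ∈ T, c ∈ L (Sum.inr w)).card := by
  classical
  set N := Finset.univ.filter fun w : Fin m => ∃ c ∈ T, c ∈ L (Sum.inr w) with hN
  have h2 := sum_mult L T
  have h3 : (L (Sum.inl 0) ∩ T).card + 1 ≤ k := by
    have hsub : insert a (L (Sum.inl 0) ∩ T) ⊆ L (Sum.inl 0) := by
      intro x hx
      rcases Finset.mem_insert.mp hx with h | h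
      · exact h ▸ ha
      · exact (Finset.mem_inter.mp h).1
    have hnot : a ∉ L (Sum.inl 0) ∩ T := fun h => hTa (Finset.mem_inter.mp h).2
    have := Finset.card_le_card hsub
    rw [Finset.card_insert_of_notMem hnot, hL] at this
    omega
  have h4 : ∑ w : Fin m, ((L (Sum.inr w)) ∩ T).card ≤ N.card * k := by
    have hvan : ∀ w ∈ (Finset.univ : Finset (Fin m)), w ∉ N →
        ((L (Sum.inr w)) ∩ T).card = 0 := by
      intro w _ hw
      rw [Finset.card_eq_zero, Finset.eq_empty_iff_forall_notMem]
      intro c hc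
      rcases Finset.mem_inter.mp hc with ⟨hc1, hc2⟩
      exact hw (Finset.mem_filter.mpr ⟨Finset.mem_univ _, ⟨c, hc2, hc1⟩⟩)
    rw [← Finset.sum_subset (Finset.subset_univ N) hvan]
    calc ∑ w ∈ N, ((L (Sum.inr w)) ∩ T).card ≤ ∑ w ∈ N, k := by
          apply Finset.sum_le_sum
          intro w _
          calc ((L (Sum.inr w)) ∩ T).card ≤ (L (Sum.inr w)).card :=
                Finset.card_le_card Finset.inter_subset_left
            _ = k := hL _
      _ = N.card * k := by rw [Finset.sum_const, smul_eq_mul]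
  have h6 : k * T.card ≤ (L (Sum.inl 0) ∩ T).card + N.card * k := by
    rw [h2] at h1; omega
  rw [Nat.mul_comm N.card k] at h6
  have h7 : k * T.card < k * (N.card + 1) := by
    rw [Nat.mul_add, Nat.mul_one]
    have : k * T.card + 1 ≤ k * N.card + k := by linarith
    omega
  exact Nat.lt_succ_iff.mp (Nat.lt_of_mul_lt_mul_left h7)


def slotsOf (k : ℕ) (L : Fin 1 ⊕ Fin m → Finset ℕ) (A : Finset ℕ) : Finset (ℕ × ℕ) :=
  A.biUnion (fun c => if k + 1 ≤ mult L c then {(c,0),(c,1)} else {(c,0)})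

lemma mem_slotsOf {L : Fin 1 ⊕ Fin m → Finset ℕ} {A : Finset ℕ} {p : ℕ × ℕ} :
    p ∈ slotsOf k L A ↔ p.1 ∈ A ∧ (p.2 = 0 ∨ (p.2 = 1 ∧ k + 1 ≤ mult L p.1)) := by
  classical
  simp only [slotsOf, Finset.mem_biUnion]
  constructor
  · rintro ⟨c, hc, hp⟩
    split_ifs at hp with h
    · rcases Finset.mem_insert.mp hp with h1 | h1
      · subst h1; exact ⟨hc, Or.inl rfl⟩
      · rw [Finset.mem_singleton] at h1; subst h1; exact ⟨hc, Or.inr ⟨rfl, h⟩⟩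
    · rw [Finset.mem_singleton] at hp; subst hp; exact ⟨hc, Or.inl rfl⟩
  · rintro ⟨hc, h | ⟨h1, h2⟩⟩
    · refine ⟨p.1, hc, ?_⟩
      split_ifs with h'
      · exact Finset.mem_insert.mpr (Or.inl (Prod.ext rfl h))
      · exact Finset.mem_singleton.mpr (Prod.ext rfl h)
    · refine ⟨p.1, hc, ?_⟩
      rw [if_pos h2]
      exact Finset.mem_insert.mpr (Or.inr (Finset.mem_singleton.mpr (Prod.ext rfl h1)))

lemma card_slotsOf (L : Fin 1 ⊕ Fin m → Finset ℕ) (A : Finset ℕ) :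
    (slotsOf k L A).card = ∑ c ∈ A, capa k L c := by
  classical
  rw [slotsOf, Finset.card_biUnion]
  · apply Finset.sum_congr rfl
    intro c _
    rw [capa]
    split_ifs with h
    · rw [Finset.card_insert_of_notMem (by simp), Finset.card_singleton]
    · exact Finset.card_singleton _
  · intro c _ c' _ hne
    apply Finset.disjoint_left.mpr
    intro p hp hp'
    apply hne
    have h1 : p.1 = c := by
      dsimp only at hp; split_ifs at hp <;> simp at hp <;> aesop
    have h2 : p.1 = c' := by
      dsimp only at hp'; split_ifs at hp' <;> simp at hp' <;> aesop
    rw [← h1, h2]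

lemma slotsOf_mono (L : Fin 1 ⊕ Fin m → Finset ℕ) {A B : Finset ℕ} (h : A ⊆ B) :
    slotsOf k L A ⊆ slotsOf k L B := by
  intro p hp
  rw [mem_slotsOf] at hp ⊢
  exact ⟨h hp.1, hp.2⟩

lemma mult_le' (L : Fin 1 ⊕ Fin m → Finset ℕ) (c : ℕ) : mult L c ≤ 1 + m := by
  have := Finset.card_filter_le (Finset.univ : Finset (Fin 1 ⊕ Fin m)) (fun v => c ∈ L v)
  simpa [mult] using this

lemma subset_palette (L : Fin 1 ⊕ Fin m → Finset ℕ) (v : Fin 1 ⊕ Fin m) :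
    L v ⊆ palette L := Finset.subset_biUnion_of_mem L (Finset.mem_univ v)

lemma sum_mult_palette (L : Fin 1 ⊕ Fin m → Finset ℕ) (hL : IsKAssignment L k) :
    ∑ c ∈ palette L, mult L c = (1 + m) * k := by
  classical
  have key : ∀ A : Finset ℕ, (∀ v, L v ⊆ A) →
      ∑ c ∈ A, mult L c = ∑ v : Fin 1 ⊕ Fin m, (L v ∩ A).card := by
    intro A hA
    simp only [mult, Finset.card_filter]
    rw [Finset.sum_comm]
    congr 1; ext v
    rw [← Finset.card_filter, Finset.filter_mem_eq_inter, Finset.inter_comm]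
  rw [key (palette L) (subset_palette L)]
  have : ∀ v : Fin 1 ⊕ Fin m, (L v ∩ palette L).card = k := by
    intro v
    rw [Finset.inter_eq_left.mpr (subset_palette L v), hL]
  rw [Finset.sum_congr rfl (fun v _ => this v), Finset.sum_const, smul_eq_mul]
  congr 1
  simp [Fintype.card_sum]

/-- total capacity of non-a colors is at least m -/
lemma capa_total (L : Fin 1 ⊕ Fin m → Finset ℕ) (a : ℕ) (hL : IsKAssignment L k)
    (hk2 : 2 ≤ k) (hm2k : m + 2 ≤ 2 * k) (ha : a ∈ L (Sum.inl 0))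
    (hamin : ∀ b ∈ L (Sum.inl 0), mult L a ≤ mult L b) :
    m ≤ ∑ c ∈ (palette L).erase a, capa k L c := by
  classical
  have hap : a ∈ palette L := subset_palette L _ ha
  have hsplit : capa k L a + ∑ c ∈ (palette L).erase a, capa k L c
      = ∑ c ∈ palette L, capa k L c := Finset.add_sum_erase _ _ hap
  have hcap_mult : ∀ c, mult L c ≤ k * capa k L c := by
    intro c
    rw [capa]
    split_ifs with h
    · have := mult_le' L c; omega
    · omega
  by_cases hma : k + 1 ≤ mult L a
  · -- every color of the center's list is huge
    have hhuge : ∀ b ∈ L (Sum.inl 0), k + 1 ≤ mult L b :=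
      fun b hb => le_trans hma (hamin b hb)
    have hLsub : L (Sum.inl 0) ⊆ palette L := subset_palette L _
    have hsd : (∑ c ∈ palette L \ L (Sum.inl 0), mult L c)
        + ∑ c ∈ L (Sum.inl 0), mult L c = ∑ c ∈ palette L, mult L c :=
      Finset.sum_sdiff hLsub
    have h1 : ∀ c ∈ L (Sum.inl 0), mult L c + 1 ≤ k * capa k L c := by
      intro c hc
      have h2 := hhuge c hc
      rw [capa, if_pos h2]
      have := mult_le' L c
      omega
    have h2 : ∑ c ∈ L (Sum.inl 0), (mult L c + 1) ≤ ∑ c ∈ L (Sum.inl 0), k * capa k L c :=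
      Finset.sum_le_sum h1
    have h3 : ∑ c ∈ palette L \ L (Sum.inl 0), mult L c
        ≤ ∑ c ∈ palette L \ L (Sum.inl 0), k * capa k L c :=
      Finset.sum_le_sum (fun c _ => hcap_mult c)
    have h4 : (∑ c ∈ palette L \ L (Sum.inl 0), k * capa k L c)
        + ∑ c ∈ L (Sum.inl 0), k * capa k L c = k * ∑ c ∈ palette L, capa k L c := by
      rw [← Finset.mul_sum, ← Finset.mul_sum, ← Nat.mul_add, Finset.sum_sdiff hLsub]
    have h5 : ∑ c ∈ L (Sum.inl 0), (mult L c + 1)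
        = (∑ c ∈ L (Sum.inl 0), mult L c) + k := by
      rw [Finset.sum_add_distrib, Finset.sum_const, smul_eq_mul, mul_one, hL]
    have h6 : k * (m + 2) ≤ k * ∑ c ∈ palette L, capa k L c := by
      have hsm := sum_mult_palette L hL
      have hr : k * (m + 2) = (1 + m) * k + k := by ring
      omega
    have h7 : m + 2 ≤ ∑ c ∈ palette L, capa k L c :=
      Nat.le_of_mul_le_mul_left h6 (by omega)
    have h8 : capa k L a = 2 := by rw [capa, if_pos hma]
    omega
  · have h6 : k * (1 + m) ≤ k * ∑ c ∈ palette L, capa k L c := by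
      rw [Finset.mul_sum]
      calc k * (1 + m) = ∑ c ∈ palette L, mult L c := by
            rw [sum_mult_palette L hL]; ring
        _ ≤ _ := Finset.sum_le_sum (fun c _ => hcap_mult c)
    have h7 : 1 + m ≤ ∑ c ∈ palette L, capa k L c :=
      Nat.le_of_mul_le_mul_left h6 (by omega)
    have h8 : capa k L a = 1 := by rw [capa, if_neg hma]
    omega



def tfun (k : ℕ) (L : Fin 1 ⊕ Fin m → Finset ℕ) (d : ℕ) (p : ℕ × ℕ) :
    Finset (Fin m ⊕ Fin d) :=
  ((Finset.univ.filter (fun w : Fin m => p.1 ∈ L (Sum.inr w))).image Sum.inl) ∪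
  (if p.2 = 0 ∧ k ≤ mult L p.1 then ∅ else Finset.univ.image Sum.inr)

lemma hall_cond (L : Fin 1 ⊕ Fin m → Finset ℕ) (a d : ℕ) (hL : IsKAssignment L k)
    (hk2 : 2 ≤ k) (hm2k : m + 2 ≤ 2 * k) (ha : a ∈ L (Sum.inl 0))
    (hamin : ∀ b ∈ L (Sum.inl 0), mult L a ≤ mult L b)
    (hd : (slotsOf k L ((palette L).erase a)).card = m + d)
    (s : Finset {x // x ∈ slotsOf k L ((palette L).erase a)}) :
    s.card ≤ (s.biUnion (fun x => tfun k L d x.val)).card := by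
  classical
  set s' := s.image Subtype.val with hs'
  have hcs : s'.card = s.card := Finset.card_image_of_injective _ Subtype.val_injective
  have hs'sub : s' ⊆ slotsOf k L ((palette L).erase a) := by
    intro p hp
    obtain ⟨x, _, rfl⟩ := Finset.mem_image.mp hp
    exact x.2
  have hmem_t : ∀ p ∈ s', ∀ w : Fin m, p.1 ∈ L (Sum.inr w) →
      (Sum.inl w : Fin m ⊕ Fin d) ∈ s.biUnion (fun x => tfun k L d x.val) := by
    intro p hp w hw
    obtain ⟨x, hx, rfl⟩ := Finset.mem_image.mp hp
    apply Finset.mem_biUnion.mpr ⟨x, hx, ?_⟩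
    apply Finset.mem_union_left
    exact Finset.mem_image.mpr ⟨w, Finset.mem_filter.mpr ⟨Finset.mem_univ _, hw⟩, rfl⟩
  by_cases hca : ∀ p ∈ s', p.2 = 0 ∧ k ≤ mult L p.1
  · -- all slots demanded
    set T := s'.image Prod.fst with hT
    have hTc : T.card = s'.card := by
      apply Finset.card_image_of_injOn
      intro p hp q hq hpq
      have h1 := (hca p hp).1
      have h2 := (hca q hq).1
      exact Prod.ext hpq (h1.trans h2.symm)
    have hTmem : ∀ c ∈ T, c ≠ a ∧ k ≤ mult L c ∧ ∃ p ∈ s', p.1 = c := by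
      intro c hc
      obtain ⟨p, hp, rfl⟩ := Finset.mem_image.mp hc
      have h1 := hs'sub hp
      rw [mem_slotsOf] at h1
      exact ⟨Finset.ne_of_mem_erase h1.1, (hca p hp).2, p, hp, rfl⟩
    have hTa : a ∉ T := fun h => (hTmem a h).1 rfl
    have hM2 := M2 L a hL (by omega) ha T hTa (by
      calc k * T.card = ∑ _c ∈ T, k := by rw [Finset.sum_const, smul_eq_mul, mul_comm]
        _ ≤ ∑ c ∈ T, mult L c := Finset.sum_le_sum (fun c hc => (hTmem c hc).2.1))
    set N := Finset.univ.filter fun w : Fin m => ∃ c ∈ T, c ∈ L (Sum.inr w) with hN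
    have hNsub : N.image (Sum.inl : Fin m → Fin m ⊕ Fin d)
        ⊆ s.biUnion (fun x => tfun k L d x.val) := by
      intro v hv
      obtain ⟨w, hw, rfl⟩ := Finset.mem_image.mp hv
      obtain ⟨c, hc, hcw⟩ := (Finset.mem_filter.mp hw).2
      obtain ⟨p, hp, rfl⟩ := (hTmem c hc).2.2
      exact hmem_t p hp w hcw
    calc s.card = T.card := by omega
      _ ≤ N.card := hM2
      _ = (N.image (Sum.inl : Fin m → Fin m ⊕ Fin d)).card :=
          (Finset.card_image_of_injective _ Sum.inl_injective).symm
      _ ≤ _ := Finset.card_le_card hNsub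
  · -- some slot admits dummies
    push_neg at hca
    obtain ⟨p₀, hp₀, hp₀'⟩ := hca
    have hdum : Finset.univ.image (Sum.inr : Fin d → Fin m ⊕ Fin d)
        ⊆ s.biUnion (fun x => tfun k L d x.val) := by
      obtain ⟨x, hx, rfl⟩ := Finset.mem_image.mp hp₀
      intro v hv
      apply Finset.mem_biUnion.mpr ⟨x, hx, ?_⟩
      apply Finset.mem_union_right
      rw [if_neg]
      · exact hv
      · intro hcontra
        have := hp₀' hcontra.1
        omega
    set N := Finset.univ.filter (fun w : Fin m => ∃ p ∈ s', p.1 ∈ L (Sum.inr w)) with hN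
    have hNsub : N.image (Sum.inl : Fin m → Fin m ⊕ Fin d)
        ⊆ s.biUnion (fun x => tfun k L d x.val) := by
      intro v hv
      obtain ⟨w, hw, rfl⟩ := Finset.mem_image.mp hv
      obtain ⟨p, hp, hcw⟩ := (Finset.mem_filter.mp hw).2
      exact hmem_t p hp w hcw
    have hunion : (N.image (Sum.inl : Fin m → Fin m ⊕ Fin d))
        ∪ Finset.univ.image (Sum.inr : Fin d → Fin m ⊕ Fin d)
        ⊆ s.biUnion (fun x => tfun k L d x.val) := Finset.union_subset hNsub hdum
    have hdisj : Disjoint (N.image (Sum.inl : Fin m → Fin m ⊕ Fin d))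
        (Finset.univ.image (Sum.inr : Fin d → Fin m ⊕ Fin d)) := by
      apply Finset.disjoint_left.mpr
      intro v hv1 hv2
      obtain ⟨w, _, rfl⟩ := Finset.mem_image.mp hv1
      obtain ⟨z, _, hz⟩ := Finset.mem_image.mp hv2
      exact Sum.inl_ne_inr hz.symm
    have hcard1 : N.card + d ≤ (s.biUnion (fun x => tfun k L d x.val)).card := by
      have := Finset.card_le_card hunion
      rw [Finset.card_union_of_disjoint hdisj,
        Finset.card_image_of_injective _ Sum.inl_injective,
        Finset.card_image_of_injective _ Sum.inr_injective] at this
      simpa using this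
    -- now bound s.card via M1 on the non-neighbours
    set S₀ := Finset.univ.filter (fun w : Fin m => ¬ ∃ p ∈ s', p.1 ∈ L (Sum.inr w)) with hS₀
    have hNS₀ : N.card + S₀.card = m := by
      rw [hN, hS₀]
      rw [Finset.card_filter_add_card_filter_not]
      simp
    set U := S₀.biUnion (fun w => (L (Sum.inr w)).erase a) with hU
    have hM1 := M1 L a hL hk2 hm2k ha hamin S₀
    rw [← hU] at hM1
    have hUs : (slotsOf k L U).card = ∑ c ∈ U, capa k L c := card_slotsOf L U
    have hUsub : slotsOf k L U ⊆ slotsOf k L ((palette L).erase a) := by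
      apply slotsOf_mono
      intro c hc
      obtain ⟨w, _, hcw⟩ := Finset.mem_biUnion.mp hc
      exact Finset.mem_erase.mpr ⟨Finset.ne_of_mem_erase hcw,
        subset_palette L (Sum.inr w) (Finset.mem_of_mem_erase hcw)⟩
    have hdisj2 : Disjoint (slotsOf k L U) s' := by
      apply Finset.disjoint_left.mpr
      intro p hp hps
      rw [mem_slotsOf] at hp
      obtain ⟨w, hw, hcw⟩ := Finset.mem_biUnion.mp hp.1
      exact (Finset.mem_filter.mp hw).2 ⟨p, hps, Finset.mem_of_mem_erase hcw⟩
    have hcard2 : (slotsOf k L U).card + s'.card ≤ m + d := by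
      have h1 : (slotsOf k L U) ∪ s' ⊆ slotsOf k L ((palette L).erase a) :=
        Finset.union_subset hUsub hs'sub
      have h2 := Finset.card_le_card h1
      rw [Finset.card_union_of_disjoint hdisj2] at h2
      omega
    omega
variable {m k : ℕ}

lemma choosable (hk2 : 2 ≤ k) (hm2k : m + 2 ≤ 2 * k) :
    ProportionallyChoosable (KBip 1 m) k := by
  classical
  intro L hL
  have hLu : (L (Sum.inl 0)).Nonempty := by
    rw [← Finset.card_pos, hL]; omega
  obtain ⟨a, ha, hamin⟩ := Finset.exists_min_image (L (Sum.inl 0)) (mult L) hLu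
  have hm_le : m ≤ (slotsOf k L ((palette L).erase a)).card := by
    rw [card_slotsOf]
    exact capa_total L a hL hk2 hm2k ha hamin
  set d := (slotsOf k L ((palette L).erase a)).card - m with hd
  have hdc : (slotsOf k L ((palette L).erase a)).card = m + d := by omega
  have hall := hall_cond L a d hL hk2 hm2k ha hamin hdc
  obtain ⟨f, hfinj, hfmem⟩ := (Finset.all_card_le_biUnion_card_iff_existsInjective'
      (fun x : {x // x ∈ slotsOf k L ((palette L).erase a)} => tfun k L d x.val)).mp hall
  have hcards : Fintype.card {x // x ∈ slotsOf k L ((palette L).erase a)}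
      = Fintype.card (Fin m ⊕ Fin d) := by
    rw [Fintype.card_coe, hdc]
    simp
  have hfbij : Function.Bijective f :=
    (Fintype.bijective_iff_injective_and_card f).mpr ⟨hfinj, hcards⟩
  set e := Equiv.ofBijective f hfbij with he
  set slotc : Fin m → ℕ × ℕ := fun w => ((e.symm (Sum.inl w)) :
      {x // x ∈ slotsOf k L ((palette L).erase a)}).val with hslotc
  have hslot_mem : ∀ w, slotc w ∈ slotsOf k L ((palette L).erase a) :=
    fun w => (e.symm (Sum.inl w)).2
  have hef : ∀ x, e x = f x := fun x => rfl
  have hslot_f : ∀ w : Fin m, f (e.symm (Sum.inl w)) = Sum.inl w :=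
    fun w => e.apply_symm_apply (Sum.inl w)
  have hslot_list : ∀ w : Fin m, (slotc w).1 ∈ L (Sum.inr w) := by
    intro w
    have h1 := hfmem (e.symm (Sum.inl w))
    rw [hslot_f w] at h1
    rw [tfun] at h1
    rcases Finset.mem_union.mp h1 with h2 | h2
    · obtain ⟨w', hw', hww⟩ := Finset.mem_image.mp h2
      rw [Sum.inl.injEq] at hww
      subst hww
      exact (Finset.mem_filter.mp hw').2
    · split_ifs at h2 with h3
      · exact absurd h2 (Finset.notMem_empty _)
      · obtain ⟨z, _, hz⟩ := Finset.mem_image.mp h2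
        exact absurd hz (by simp)
  have hslot_ne : ∀ w : Fin m, (slotc w).1 ≠ a := by
    intro w
    have := hslot_mem w
    rw [mem_slotsOf] at this
    exact Finset.ne_of_mem_erase this.1
  set F : Fin 1 ⊕ Fin m → ℕ := Sum.elim (fun _ => a) (fun w => (slotc w).1) with hF
  set leafcnt : ℕ → ℕ :=
    fun c => (Finset.univ.filter fun w : Fin m => (slotc w).1 = c).card with hlc
  have hclass : ∀ c, (Finset.univ.filter (fun v => F v = c)).card
      = (if a = c then 1 else 0) + leafcnt c := by
    intro c
    rw [Finset.card_filter, Fintype.sum_sum_type, Fin.sum_univ_one]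
    simp only [hF, Sum.elim_inl, Sum.elim_inr, hlc, Finset.card_filter]
  -- upper bound on leafcnt
  have hinj : ∀ c, leafcnt c ≤ ((slotsOf k L ((palette L).erase a)).filter
      (fun p => p.1 = c)).card := by
    intro c
    apply Finset.card_le_card_of_injOn (fun w => slotc w)
    · intro w hw
      exact Finset.mem_filter.mpr ⟨hslot_mem w, (Finset.mem_filter.mp hw).2⟩
    · intro w _ w' _ hww
      have h1 : e.symm (Sum.inl w) = e.symm (Sum.inl w') := Subtype.ext hww
      have h2 := congrArg e h1
      rw [e.apply_symm_apply, e.apply_symm_apply] at h2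
      exact Sum.inl_injective h2
  have hfiltercapa : ∀ c ∈ (palette L).erase a,
      ((slotsOf k L ((palette L).erase a)).filter (fun p => p.1 = c)).card
        = capa k L c := by
    intro c hc
    have heq : (slotsOf k L ((palette L).erase a)).filter (fun p => p.1 = c)
        = slotsOf k L {c} := by
      ext p
      rw [Finset.mem_filter, mem_slotsOf, mem_slotsOf, Finset.mem_singleton]
      constructor
      · rintro ⟨⟨_, h2⟩, h3⟩; exact ⟨h3, h2⟩
      · rintro ⟨h1, h2⟩; exact ⟨⟨h1 ▸ hc, h2⟩, h1⟩
    rw [heq, card_slotsOf, Finset.sum_singleton]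
  have hfilter0 : ∀ c, c ∉ (palette L).erase a → leafcnt c = 0 := by
    intro c hc
    rw [hlc, Finset.card_eq_zero, Finset.eq_empty_iff_forall_notMem]
    intro w hw
    have h1 := hslot_mem w
    rw [mem_slotsOf] at h1
    rw [(Finset.mem_filter.mp hw).2] at h1
    exact hc h1.1
  have hdemand : ∀ c ∈ (palette L).erase a, k ≤ mult L c → 1 ≤ leafcnt c := by
    intro c hc hkc
    have hmem : ((c, 0) : ℕ × ℕ) ∈ slotsOf k L ((palette L).erase a) :=
      mem_slotsOf.mpr ⟨hc, Or.inl rfl⟩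
    have h1 := hfmem ⟨(c, 0), hmem⟩
    rw [tfun] at h1
    rw [if_pos ⟨rfl, hkc⟩, Finset.union_empty] at h1
    obtain ⟨w, hw, hww⟩ := Finset.mem_image.mp h1
    have h2 : e ⟨(c, 0), hmem⟩ = Sum.inl w := hww.symm
    have h3 : e.symm (Sum.inl w) = ⟨(c, 0), hmem⟩ := by
      rw [← h2, e.symm_apply_apply]
    have h4 : (slotc w).1 = c := by
      simp only [hslotc]
      rw [h3]
    simp only [hlc]
    exact Finset.card_pos.mpr ⟨w, Finset.mem_filter.mpr ⟨Finset.mem_univ _, h4⟩⟩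
  refine ⟨F, ⟨?_, ?_⟩, ?_⟩
  · intro v
    match v with
    | Sum.inl i =>
      have : i = 0 := Subsingleton.elim _ _
      subst this
      exact ha
    | Sum.inr w => exact hslot_list w
  · intro u w hadj
    match u, w with
    | Sum.inl i, Sum.inr w =>
      simp only [hF, Sum.elim_inl, Sum.elim_inr]
      exact fun h => hslot_ne w h.symm
    | Sum.inr w, Sum.inl i =>
      simp only [hF, Sum.elim_inl, Sum.elim_inr]
      exact hslot_ne w
    | Sum.inl i, Sum.inl j => simp at hadj
    | Sum.inr i, Sum.inr j => simp at hadj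
  · intro c hc
    have h1 : 0 < mult L c := by
      obtain ⟨v, _, hv⟩ := Finset.mem_biUnion.mp hc
      rw [mult]
      exact Finset.card_pos.mpr ⟨v, by simp [hv]⟩
    have h2 : mult L c ≤ 1 + m := mult_le' L c
    rw [hclass]
    by_cases hac : a = c
    · subst hac
      have h3 : leafcnt a = 0 := hfilter0 a (by simp)
      rw [h3, if_pos rfl]
      by_cases h4 : k ≤ mult L a
      · left
        have hq : mult L a / k = 1 := Nat.div_eq_of_lt_le (by omega) (by omega)
        rw [hq]
      · right
        have hq : (mult L a + k - 1) / k = 1 := Nat.div_eq_of_lt_le (by omega) (by omega)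
        rw [hq]
    · rw [if_neg hac]
      have hcer : c ∈ (palette L).erase a :=
        Finset.mem_erase.mpr ⟨fun h => hac h.symm, hc⟩
      have hub : leafcnt c ≤ capa k L c := by
        rw [← hfiltercapa c hcer]
        exact hinj c
      by_cases hdc2 : k ≤ mult L c
      · have hlb := hdemand c hcer hdc2
        by_cases hhug : k + 1 ≤ mult L c
        · rw [capa, if_pos hhug] at hub
          rcases (by omega : leafcnt c = 1 ∨ leafcnt c = 2) with h | h
          · left
            have hq : mult L c / k = 1 := Nat.div_eq_of_lt_le (by omega) (by omega)
            rw [h, hq]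
          · right
            have hq : (mult L c + k - 1) / k = 2 := Nat.div_eq_of_lt_le (by omega) (by omega)
            rw [h, hq]
        · have hmk : mult L c = k := by omega
          rw [capa, if_neg hhug] at hub
          left
          have hq : mult L c / k = 1 := by rw [hmk]; exact Nat.div_self (by omega)
          rw [hq]
          omega
      · rw [capa, if_neg (by omega)] at hub
        rcases (by omega : leafcnt c = 0 ∨ leafcnt c = 1) with h | h
        · left
          have hq : mult L c / k = 0 := Nat.div_eq_of_lt (by omega)
          rw [h, hq]
        · right
          have hq : (mult L c + k - 1) / k = 1 := Nat.div_eq_of_lt_le (by omega) (by omega)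
          rw [h, hq]


lemma not_choosable {m k : ℕ} (hm : 1 ≤ m) (hk : 2 * k ≤ m + 1) :
    ¬ ProportionallyChoosable (KBip 1 m) k := by
  classical
  intro h
  by_cases hk0 : k = 0
  · subst hk0
    obtain ⟨f, ⟨hmem, _⟩, _⟩ := h (fun _ => ∅) (fun v => rfl)
    exact absurd (hmem (Sum.inl 0)) (Finset.notMem_empty _)
  · obtain ⟨f, ⟨hmem, hadj⟩, hprop⟩ :=
      h (fun _ => Finset.range k) (fun v => Finset.card_range k)
    set c0 := f (Sum.inl 0) with hc0
    have hc0r : c0 ∈ Finset.range k := hmem (Sum.inl 0)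
    have hc0p : c0 ∈ palette (fun _ : Fin 1 ⊕ Fin m => Finset.range k) :=
      Finset.mem_biUnion.mpr ⟨Sum.inl 0, Finset.mem_univ _, hc0r⟩
    have hmult : mult (fun _ : Fin 1 ⊕ Fin m => Finset.range k) c0 = 1 + m := by
      rw [mult]
      rw [Finset.filter_true_of_mem (fun v _ => hc0r)]
      rw [Finset.card_univ]
      simp
    have hclass : (Finset.univ.filter (fun v : Fin 1 ⊕ Fin m => f v = c0)).card = 1 := by
      have heq : Finset.univ.filter (fun v : Fin 1 ⊕ Fin m => f v = c0)
          = {Sum.inl 0} := by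
        ext v
        simp only [Finset.mem_filter, Finset.mem_univ, true_and, Finset.mem_singleton]
        constructor
        · intro hv
          match v with
          | Sum.inl i => rw [Subsingleton.elim i 0]
          | Sum.inr w =>
            have hA : (KBip 1 m).Adj (Sum.inl 0) (Sum.inr w) := by simp
            exact absurd hv.symm (hadj hA)
        · rintro rfl
          rfl
      rw [heq, Finset.card_singleton]
    have hp := hprop c0 hc0p
    rw [hclass, hmult] at hp
    have hkpos : 0 < k := Nat.pos_of_ne_zero hk0
    have hd1 : 2 ≤ (1 + m) / k := (Nat.le_div_iff_mul_le hkpos).mpr (by omega)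
    have hd2 : 2 ≤ (1 + m + k - 1) / k := (Nat.le_div_iff_mul_le hkpos).mpr (by omega)
    omega

end Stmt2Aux

/-- For every `m ≥ 1`, `χ_pc(K_{1,m}) = 1 + ⌈m/2⌉`. -/
theorem stmt2 (m : ℕ) (hm : 1 ≤ m) :
    propChoiceNumber (KBip 1 m) = 1 + (m + 1) / 2 := by
  have hK : ProportionallyChoosable (KBip 1 m) (1 + (m + 1) / 2) :=
    Stmt2Aux.choosable (by omega) (by omega)
  have hlow : ∀ k', ProportionallyChoosable (KBip 1 m) k' → 1 + (m + 1) / 2 ≤ k' := by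
    intro k' hk'
    by_contra hcon
    push_neg at hcon
    exact Stmt2Aux.not_choosable hm (by omega) hk'
  rw [propChoiceNumber]
  apply le_antisymm
  · exact Nat.sInf_le hK
  · exact hlow _ (Nat.sInf_mem (s := {k | ProportionallyChoosable (KBip 1 m) k}) ⟨_, hK⟩)
end

section
/- If a graph G is proportionally k-choosable, then G is proportionally (k+1)-choosable. -/
open Finset SimpleGraph

lemma arith_key (k η d cnt : ℕ) (hk : 1 ≤ k)
    (hd1 : η / (k+1) ≤ d) (hd2 : d ≤ η / (k+1) + η % (k+1))
    (hcnt : cnt = (η - d) / k ∨ cnt = (η - d + k - 1) / k) :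
    cnt = η / (k+1) ∨ cnt = (η + (k+1) - 1) / (k+1) := by
  set q := η / (k+1) with hqdef
  set r := η % (k+1) with hrdef
  have hη : (k+1) * q + r = η := Nat.div_add_mod η (k+1)
  have hrk : r < k + 1 := Nat.mod_lt _ (by omega)
  have hring : (k+1) * q = k * q + q := by ring
  set ρ := q + r - d with hρdef
  have hρr : ρ ≤ r := by omega
  have hed : η - d = k * q + ρ := by omega
  have hfloor : (η - d) / k = q + ρ / k := by
    rw [hed, Nat.mul_add_div (by omega)]
  have hceil : (η - d + k - 1) / k = q + (ρ + k - 1) / k := by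
    have : η - d + k - 1 = k * q + (ρ + k - 1) := by omega
    rw [this, Nat.mul_add_div (by omega)]
  have htc : (η + (k+1) - 1) / (k+1) = q + (r + k) / (k+1) := by
    have : η + (k+1) - 1 = (k+1) * q + (r + k) := by omega
    rw [this, Nat.mul_add_div (by omega)]
  rcases hcnt with hc | hc
  · by_cases hρk : ρ = k
    · right
      rw [hc, hfloor, hρk, Nat.div_self (by omega), htc]
      have hr1 : (r + k) / (k+1) = 1 := by
        apply Nat.div_eq_of_lt_le <;> omega
      omega
    · left
      rw [hc, hfloor, Nat.div_eq_of_lt (by omega), add_zero]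
  · by_cases hρ0 : ρ = 0
    · left
      rw [hc, hceil, hρ0, Nat.div_eq_of_lt (by omega), add_zero]
    · right
      rw [hc, hceil, htc]
      have h1 : (ρ + k - 1) / k = 1 := by
        apply Nat.div_eq_of_lt_le <;> omega
      have h2 : (r + k) / (k+1) = 1 := by
        apply Nat.div_eq_of_lt_le <;> omega
      omega

lemma sum_mult {V : Type*} [Fintype V] (L : V → Finset ℕ) (C : Finset ℕ) :
    ∑ c ∈ C, mult L c = ∑ v : V, (C ∩ L v).card := by
  classical
  calc ∑ c ∈ C, mult L c
      = ∑ c ∈ C, ∑ v : V, if c ∈ L v then 1 else 0 := by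
        refine Finset.sum_congr rfl fun c _ => ?_
        rw [mult, Finset.card_filter]
    _ = ∑ v : V, ∑ c ∈ C, if c ∈ L v then 1 else 0 := Finset.sum_comm
    _ = ∑ v : V, (C ∩ L v).card := by
        refine Finset.sum_congr rfl fun v _ => ?_
        rw [← Finset.card_filter, Finset.filter_mem_eq_inter]

/-- Proportional `k`-choosability implies proportional `(k+1)`-choosability. -/
theorem stmt3 {V : Type*} [Fintype V] (G : SimpleGraph V) (k : ℕ)
    (h : ProportionallyChoosable G k) : ProportionallyChoosable G (k + 1) := by
  classical
  rcases Nat.eq_zero_or_pos k with hk0 | hk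
  · -- k = 0 : V must be empty
    subst hk0
    have hE : IsEmpty V := by
      by_contra hne
      simp only [not_isEmpty_iff] at hne
      obtain ⟨v⟩ := hne
      have hz : IsKAssignment (fun _ : V => (∅ : Finset ℕ)) 0 := fun _ => Finset.card_empty
      obtain ⟨f, hf⟩ := h _ hz
      exact absurd (hf.1.1 v) (Finset.notMem_empty _)
    intro L _
    refine ⟨fun _ => 0, ⟨fun v => hE.elim v, fun u _ _ => hE.elim u⟩, ?_⟩
    intro c hc
    exfalso
    obtain ⟨v, -, -⟩ := Finset.mem_biUnion.mp hc
    exact hE.elim v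
  · intro L hL
    set n := Fintype.card V with hn
    have hsub : ∀ v, L v ⊆ palette L := fun v c hc =>
      Finset.mem_biUnion.mpr ⟨v, Finset.mem_univ v, hc⟩
    set P := palette L with hP
    let q : ℕ → ℕ := fun c => mult L c / (k+1)
    let r : ℕ → ℕ := fun c => mult L c % (k+1)
    let u : ℕ → ℕ := fun c => q c + r c
    have hqr : ∀ c, (k+1) * q c + r c = mult L c := fun c => Nat.div_add_mod _ _
    have hu_def : ∀ c, u c = q c + r c := fun _ => rfl
    have huk : ∀ c, mult L c ≤ (k+1) * u c := by
      intro c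
      have h1 := hqr c
      have h2 : (k+1) * u c = (k+1) * q c + (k+1) * r c := by
        rw [hu_def, Nat.mul_add]
      have h3 : r c ≤ (k+1) * r c := Nat.le_mul_of_pos_left _ (by omega)
      omega
    -- Bound 1 : if all lists of A lie in C, then |A| ≤ ∑_{c∈C} u c
    have bound1 : ∀ (A : Finset V) (C : Finset ℕ), (∀ v ∈ A, L v ⊆ C) →
        A.card ≤ ∑ c ∈ C, u c := by
      intro A C hAC
      have key : (k+1) * A.card ≤ (k+1) * ∑ c ∈ C, u c := by
        calc (k+1) * A.card = ∑ _v ∈ A, (k+1) := by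
              rw [Finset.sum_const, smul_eq_mul, mul_comm]
          _ = ∑ v ∈ A, (C ∩ L v).card := by
              refine Finset.sum_congr rfl fun v hv => ?_
              rw [Finset.inter_eq_right.mpr (hAC v hv), hL v]
          _ ≤ ∑ v : V, (C ∩ L v).card :=
              Finset.sum_le_sum_of_subset (Finset.subset_univ A)
          _ = ∑ c ∈ C, mult L c := (sum_mult L C).symm
          _ ≤ ∑ c ∈ C, (k+1) * u c := Finset.sum_le_sum fun c _ => huk c
          _ = (k+1) * ∑ c ∈ C, u c := (Finset.mul_sum _ _ _).symm
      exact Nat.le_of_mul_le_mul_left key (by omega)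
    -- Bound 2
    have bound2 : ∀ A : Finset V, A.card + ∑ c ∈ P \ A.biUnion L, q c ≤ n := by
      intro A
      set C := A.biUnion L with hC
      have hkey : (k+1) * (∑ c ∈ P \ C, q c) ≤ (Finset.univ \ A).card * (k+1) := by
        calc (k+1) * ∑ c ∈ P \ C, q c
            = ∑ c ∈ P \ C, (k+1) * q c := Finset.mul_sum _ _ _
          _ ≤ ∑ c ∈ P \ C, mult L c := Finset.sum_le_sum fun c _ => by
              have := hqr c; omega
          _ = ∑ v : V, ((P \ C) ∩ L v).card := sum_mult _ _
          _ = ∑ v ∈ Finset.univ \ A, ((P \ C) ∩ L v).card := by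
              have hsplit : ∑ v ∈ Finset.univ \ A, ((P \ C) ∩ L v).card
                  + ∑ v ∈ A, ((P \ C) ∩ L v).card = ∑ v : V, ((P \ C) ∩ L v).card :=
                Finset.sum_sdiff (Finset.subset_univ A)
              have hzero : ∑ v ∈ A, ((P \ C) ∩ L v).card = 0 :=
                Finset.sum_eq_zero fun v hv => by
                  rw [Finset.card_eq_zero]
                  apply Finset.eq_empty_of_forall_notMem
                  intro c hc
                  rcases Finset.mem_inter.mp hc with ⟨h1, h2⟩
                  exact (Finset.mem_sdiff.mp h1).2 (Finset.mem_biUnion.mpr ⟨v, hv, h2⟩)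
              omega
          _ ≤ ∑ _v ∈ Finset.univ \ A, (k+1) := Finset.sum_le_sum fun v _ => by
              rw [← hL v]
              exact Finset.card_le_card Finset.inter_subset_right
          _ = (Finset.univ \ A).card * (k+1) := by
              rw [Finset.sum_const, smul_eq_mul]
      have hcard : (Finset.univ \ A).card + A.card = n := by
        rw [Finset.card_sdiff_of_subset (Finset.subset_univ A), Finset.card_univ, ← hn]
        have := Finset.card_le_univ A
        omega
      have h2 : ∑ c ∈ P \ C, q c ≤ (Finset.univ \ A).card := by
        refine Nat.le_of_mul_le_mul_left ?_ (show 0 < k+1 by omega)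
        calc (k+1) * ∑ c ∈ P \ C, q c ≤ (Finset.univ \ A).card * (k+1) := hkey
          _ = (k+1) * (Finset.univ \ A).card := mul_comm _ _
      omega
    -- slots
    let slotOf : ℕ → Finset (ℕ × ℕ) := fun c => (Finset.range (u c)).image (fun i => (c, i))
    have hslot_card : ∀ c, (slotOf c).card = u c := fun c => by
      rw [Finset.card_image_of_injective _ (fun i j hij => by simpa using hij),
        Finset.card_range]
    have hslot_fst : ∀ c x, x ∈ slotOf c → x.1 = c ∧ x.2 < u c := by
      intro c x hx
      simp only [slotOf, Finset.mem_image, Finset.mem_range] at hx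
      obtain ⟨i, hi, rfl⟩ := hx
      exact ⟨rfl, hi⟩
    have hslot_mem : ∀ c i, i < u c → (c, i) ∈ slotOf c := fun c i hi =>
      Finset.mem_image.mpr ⟨i, Finset.mem_range.mpr hi, rfl⟩
    let optOf : ℕ → Finset (ℕ × ℕ) := fun c => (Finset.Ico (q c) (u c)).image (fun i => (c, i))
    have hopt_sub : ∀ c, optOf c ⊆ slotOf c := by
      intro c
      apply Finset.image_subset_image
      intro i hi
      rw [Finset.mem_Ico] at hi
      exact Finset.mem_range.mpr hi.2
    have hopt_card : ∀ c, (optOf c).card = r c := fun c => by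
      rw [Finset.card_image_of_injective _ (fun i j hij => by simpa using hij),
        Nat.card_Ico]
      have := hu_def c
      omega
    have hopt_fst : ∀ c x, x ∈ optOf c → x.1 = c ∧ q c ≤ x.2 := by
      intro c x hx
      simp only [optOf, Finset.mem_image, Finset.mem_Ico] at hx
      obtain ⟨i, hi, rfl⟩ := hx
      exact ⟨rfl, hi.1⟩
    have hdisj : ∀ C : Finset ℕ, ∀ c1 ∈ C, ∀ c2 ∈ C, c1 ≠ c2 →
        Disjoint (slotOf c1) (slotOf c2) := by
      intro C c1 _ c2 _ hne
      rw [Finset.disjoint_left]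
      intro x h1 h2
      exact hne (((hslot_fst c1 x h1).1).symm.trans (hslot_fst c2 x h2).1)
    have hbi_card : ∀ C : Finset ℕ, (C.biUnion slotOf).card = ∑ c ∈ C, u c := fun C => by
      rw [Finset.card_biUnion (hdisj C)]
      exact Finset.sum_congr rfl fun c _ => hslot_card c
    have hPn : n ≤ ∑ c ∈ P, u c := by
      have := bound1 Finset.univ P (fun v _ => hsub v)
      rwa [Finset.card_univ, ← hn] at this
    set D : ℕ := ∑ c ∈ P, u c - n with hD
    have hnD : n + D = ∑ c ∈ P, u c := by omega
    let t : V ⊕ Fin D → Finset (ℕ × ℕ) :=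
      Sum.elim (fun v => (L v).biUnion slotOf) (fun _ => P.biUnion optOf)
    -- Hall's condition
    have hall : ∀ s : Finset (V ⊕ Fin D), s.card ≤ (s.biUnion t).card := by
      intro s
      set A := s.toLeft with hA
      set C := A.biUnion L with hC
      have hCP : C ⊆ P := Finset.biUnion_subset.mpr fun v _ => hsub v
      have hsub1 : C.biUnion slotOf ⊆ s.biUnion t := by
        intro x hx
        obtain ⟨c, hc, hxc⟩ := Finset.mem_biUnion.mp hx
        obtain ⟨v, hv, hcv⟩ := Finset.mem_biUnion.mp hc
        exact Finset.mem_biUnion.mpr ⟨Sum.inl v, Finset.mem_toLeft.mp hv,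
          Finset.mem_biUnion.mpr ⟨c, hcv, hxc⟩⟩
      have hcards := Finset.card_toLeft_add_card_toRight (u := s)
      have hboundA : A.card ≤ ∑ c ∈ C, u c :=
        bound1 A C (fun v hv c hc => Finset.mem_biUnion.mpr ⟨v, hv, hc⟩)
      rcases Finset.eq_empty_or_nonempty s.toRight with hre | ⟨dd, hdd⟩
      · have hs : s.card = A.card := by rw [← hcards, hre]; simp [hA]
        rw [hs]
        calc A.card ≤ ∑ c ∈ C, u c := hboundA
          _ = (C.biUnion slotOf).card := (hbi_card C).symm
          _ ≤ _ := Finset.card_le_card hsub1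
      · have hsub2 : (P \ C).biUnion optOf ⊆ s.biUnion t := by
          intro x hx
          refine Finset.mem_biUnion.mpr ⟨Sum.inr dd, Finset.mem_toRight.mp hdd, ?_⟩
          obtain ⟨c, hc, hxc⟩ := Finset.mem_biUnion.mp hx
          exact Finset.mem_biUnion.mpr ⟨c, (Finset.mem_sdiff.mp hc).1, hxc⟩
        have hdisj2 : Disjoint (C.biUnion slotOf) ((P \ C).biUnion optOf) := by
          rw [Finset.disjoint_left]
          intro x h1 h2
          obtain ⟨c1, hc1, hx1⟩ := Finset.mem_biUnion.mp h1
          obtain ⟨c2, hc2, hx2⟩ := Finset.mem_biUnion.mp h2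
          have e1 := (hslot_fst c1 x hx1).1
          have e2 := (hopt_fst c2 x hx2).1
          have : c1 = c2 := e1.symm.trans e2
          exact (Finset.mem_sdiff.mp hc2).2 (this ▸ hc1)
        have hdisjopt : ∀ c1 ∈ P \ C, ∀ c2 ∈ P \ C, c1 ≠ c2 →
            Disjoint (optOf c1) (optOf c2) := by
          intro c1 h1 c2 h2 hne
          exact Finset.disjoint_of_subset_left (hopt_sub c1)
            (Finset.disjoint_of_subset_right (hopt_sub c2) (by
              rw [Finset.disjoint_left]
              intro x hx1 hx2
              exact hne (((hslot_fst c1 x hx1).1).symm.trans (hslot_fst c2 x hx2).1)))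
        have hunion : (C.biUnion slotOf ∪ (P \ C).biUnion optOf).card
            = ∑ c ∈ C, u c + ∑ c ∈ P \ C, r c := by
          rw [Finset.card_union_of_disjoint hdisj2, hbi_card C,
            Finset.card_biUnion hdisjopt]
          congr 1
          exact Finset.sum_congr rfl fun c _ => hopt_card c
        have hDright : s.toRight.card ≤ D := by
          simpa using Finset.card_le_univ s.toRight
        have hb2 := bound2 A
        rw [← hC] at hb2
        have hsplit : ∑ c ∈ P \ C, u c + ∑ c ∈ C, u c = ∑ c ∈ P, u c :=
          Finset.sum_sdiff hCP
        have hur : ∑ c ∈ P \ C, u c = ∑ c ∈ P \ C, q c + ∑ c ∈ P \ C, r c := by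
          rw [← Finset.sum_add_distrib]
        calc s.card = A.card + s.toRight.card := hcards.symm
          _ ≤ (C.biUnion slotOf ∪ (P \ C).biUnion optOf).card := by
              rw [hunion]; omega
          _ ≤ _ := Finset.card_le_card (Finset.union_subset hsub1 hsub2)
    obtain ⟨F, hFinj, hFmem⟩ := (Finset.all_card_le_biUnion_card_iff_exists_injective t).mp hall
    have hgspec : ∀ v : V, (F (Sum.inl v)).1 ∈ L v ∧
        F (Sum.inl v) ∈ slotOf ((F (Sum.inl v)).1) := by
      intro v
      have hm := hFmem (Sum.inl v)
      simp only [t, Sum.elim_inl] at hm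
      obtain ⟨c, hc, hxc⟩ := Finset.mem_biUnion.mp hm
      have he := (hslot_fst c _ hxc).1
      constructor
      · rw [he]; exact hc
      · rw [he]; exact hxc
    let g : V → ℕ := fun v => (F (Sum.inl v)).1
    let dcnt : ℕ → ℕ := fun c => (Finset.univ.filter (fun v => g v = c)).card
    have hupper : ∀ c, dcnt c ≤ u c := by
      intro c
      have hle : (Finset.univ.filter (fun v => g v = c)).card ≤ (Finset.range (u c)).card := by
        apply Finset.card_le_card_of_injOn (fun v => (F (Sum.inl v)).2)
        · intro v hv
          have hgv : g v = c := (Finset.mem_filter.mp hv).2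
          have hs := (hgspec v).2
          rw [show ((F (Sum.inl v)).1 = c) from hgv] at hs
          exact Finset.mem_range.mpr (hslot_fst c _ hs).2
        · intro v1 h1 v2 h2 heq
          have hg1 : g v1 = c := (Finset.mem_filter.mp (Finset.mem_coe.mp h1)).2
          have hg2 : g v2 = c := (Finset.mem_filter.mp (Finset.mem_coe.mp h2)).2
          have hFeq : F (Sum.inl v1) = F (Sum.inl v2) := by
            apply Prod.ext
            · exact (show ((F (Sum.inl v1)).1 = c) from hg1).trans
                (show ((F (Sum.inl v2)).1 = c) from hg2).symm
            · exact heq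
          exact Sum.inl_injective (hFinj hFeq)
      rwa [Finset.card_range] at hle
    set allS := P.biUnion slotOf with hallS
    have htsub : ∀ x, t x ⊆ allS := by
      intro x
      cases x with
      | inl v =>
        exact Finset.biUnion_subset_biUnion_of_subset_left slotOf (hsub v)
      | inr d =>
        intro y hy
        obtain ⟨c, hc, hyc⟩ := Finset.mem_biUnion.mp hy
        exact Finset.mem_biUnion.mpr ⟨c, hc, hopt_sub c hyc⟩
    have himg : Finset.univ.image F = allS := by
      apply Finset.eq_of_subset_of_card_le
      · intro y hy
        obtain ⟨x, -, rfl⟩ := Finset.mem_image.mp hy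
        exact htsub x (hFmem x)
      · rw [Finset.card_image_of_injective _ hFinj, Finset.card_univ,
          Fintype.card_sum, Fintype.card_fin, hbi_card P, ← hn]
        omega
    have hlower : ∀ c ∈ P, q c ≤ dcnt c := by
      intro c hcP
      have hsurj : Set.SurjOn (fun v => (F (Sum.inl v)).2)
          ↑(Finset.univ.filter (fun v => g v = c)) ↑(Finset.range (q c)) := by
        intro i hi
        simp only [Finset.coe_range, Set.mem_Iio] at hi
        have hiu : i < u c := lt_of_lt_of_le hi (Nat.le_add_right _ _)
        have hmem : (c, i) ∈ allS := Finset.mem_biUnion.mpr ⟨c, hcP, hslot_mem c i hiu⟩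
        rw [← himg] at hmem
        obtain ⟨x, -, hx⟩ := Finset.mem_image.mp hmem
        cases x with
        | inl v =>
          refine ⟨v, ?_, ?_⟩
          · apply Finset.mem_coe.mpr
            refine Finset.mem_filter.mpr ⟨Finset.mem_univ v, ?_⟩
            show (F (Sum.inl v)).1 = c
            rw [hx]
          · show (F (Sum.inl v)).2 = i
            rw [hx]
        | inr dd =>
          exfalso
          have hmem2 := hFmem (Sum.inr dd)
          simp only [t, Sum.elim_inr] at hmem2
          rw [hx] at hmem2
          obtain ⟨c2, -, hc2⟩ := Finset.mem_biUnion.mp hmem2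
          have h1 := hopt_fst c2 _ hc2
          have hcc : c2 = c := h1.1.symm
          rw [hcc] at h1
          exact absurd h1.2 (by omega)
      have := Finset.card_le_card_of_surjOn _ hsurj
      rwa [Finset.card_range] at this
    -- the reduced assignment
    let L' : V → Finset ℕ := fun v => (L v).erase (g v)
    have hL'card : IsKAssignment L' k := by
      intro v
      rw [show L' v = (L v).erase (g v) from rfl,
        Finset.card_erase_of_mem (hgspec v).1, hL v]
      omega
    obtain ⟨f, ⟨hfmem, hfadj⟩, hfprop⟩ := h L' hL'card
    refine ⟨f, ⟨fun v => Finset.mem_of_mem_erase (hfmem v), hfadj⟩, ?_⟩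
    intro c hcP
    have hsubf : Finset.univ.filter (fun v => g v = c) ⊆
        Finset.univ.filter (fun v => c ∈ L v) := by
      intro v hv
      refine Finset.mem_filter.mpr ⟨Finset.mem_univ v, ?_⟩
      rw [← (Finset.mem_filter.mp hv).2]
      exact (hgspec v).1
    have hfilter : Finset.univ.filter (fun v => c ∈ L' v) =
        Finset.univ.filter (fun v => c ∈ L v) \ Finset.univ.filter (fun v => g v = c) := by
      ext v
      simp only [Finset.mem_filter, Finset.mem_sdiff, Finset.mem_univ, true_and]
      constructor
      · intro hm
        have := Finset.mem_erase.mp hm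
        exact ⟨this.2, fun hg => this.1 hg.symm⟩
      · rintro ⟨hmem, hne⟩
        exact Finset.mem_erase.mpr ⟨fun hcg => hne hcg.symm, hmem⟩
    have hmult' : mult L' c = mult L c - dcnt c := by
      rw [mult, hfilter, Finset.card_sdiff_of_subset hsubf]
      rfl
    by_cases hc' : c ∈ palette L'
    · have hp := hfprop c hc'
      rw [hmult'] at hp
      exact arith_key k (mult L c) (dcnt c) _ hk (hlower c hcP) (hupper c) hp
    · have hzero : Finset.univ.filter (fun v => f v = c) = ∅ := by
        rw [Finset.filter_eq_empty_iff]
        intro v _ hfv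
        exact hc' (Finset.mem_biUnion.mpr ⟨v, Finset.mem_univ v, hfv ▸ hfmem v⟩)
      have hm0 : mult L' c = 0 := by
        rw [mult, Finset.card_eq_zero, Finset.filter_eq_empty_iff]
        intro v _ hcv
        exact hc' (Finset.mem_biUnion.mpr ⟨v, Finset.mem_univ v, hcv⟩)
      left
      rw [hzero, Finset.card_empty]
      have hd_le : dcnt c ≤ mult L c := Finset.card_le_card hsubf
      have hdeq : dcnt c = mult L c := by omega
      have hqr' := hqr c
      have hu := hupper c
      have hud := hu_def c
      have hring : (k+1) * q c = k * q c + q c := by ring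
      have hkq : k * q c = 0 := by omega
      have hq0 : q c = 0 := by
        rcases Nat.mul_eq_zero.mp hkq with h0 | h0
        · omega
        · exact h0
      exact hq0.symm
end

section
/- If H is a subgraph of G and G is proportionally k-choosable, then H is proportionally k-choosable; consequently χ_pc(H) ≤ χ_pc(G). -/
open Finset SimpleGraph

/-- Monotonicity: proportional k-choosability passes to subgraphs. -/
lemma pc_mono {V W : Type*} [Fintype V] [Fintype W] (G : SimpleGraph V)
    (H : SimpleGraph W) (φ : W → V) (hφ : Function.Injective φ)
    (hsub : ∀ ⦃u w⦄, H.Adj u w → G.Adj (φ u) (φ w)) (k : ℕ)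
    (hG : ProportionallyChoosable G k) : ProportionallyChoosable H k := by
  classical
  intro L' hL'
  set N : ℕ := (palette L').sup id + 1 with hNdef
  set L : V → Finset ℕ := fun v =>
    if h : ∃ w, φ w = v then L' h.choose
    else (Finset.range k).image (fun i => N + k * (Fintype.equivFin V v : ℕ) + i) with hLdef
  have hLφ : ∀ w, L (φ w) = L' w := by
    intro w
    have h : ∃ w', φ w' = φ w := ⟨w, rfl⟩
    rw [hLdef]
    simp only []
    rw [dif_pos h, hφ h.choose_spec]
  have hLfresh : ∀ v, (¬ ∃ w, φ w = v) → ∀ c ∈ L v, N ≤ c := by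
    intro v h c hc
    rw [hLdef] at hc
    simp only [dif_neg h, Finset.mem_image, Finset.mem_range] at hc
    obtain ⟨i, _, rfl⟩ := hc
    simp [add_assoc]
  have hAssign : IsKAssignment L k := by
    intro v
    by_cases h : ∃ w, φ w = v
    · rw [hLdef]; simp only [dif_pos h]; exact hL' _
    · rw [hLdef]; simp only [dif_neg h]
      rw [Finset.card_image_of_injective _ (fun a b hab => Nat.add_left_cancel hab)]
      exact Finset.card_range k
  obtain ⟨f, ⟨hfmem, hfprop⟩, hfcount⟩ := hG L hAssign
  refine ⟨f ∘ φ, ⟨⟨fun w => by rw [← hLφ w]; exact hfmem (φ w),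
    fun u w h => hfprop (hsub h)⟩, ?_⟩⟩
  intro c hc
  have hcN : c < N := by
    have : id c ≤ (palette L').sup id := Finset.le_sup hc
    simp only [id] at this
    omega
  have e1 : (Finset.univ.filter (fun v => c ∈ L v)) =
      (Finset.univ.filter (fun w => c ∈ L' w)).image φ := by
    ext v
    simp only [Finset.mem_filter, Finset.mem_univ, true_and, Finset.mem_image]
    constructor
    · intro hcv
      by_cases h : ∃ w, φ w = v
      · obtain ⟨w, rfl⟩ := h
        exact ⟨w, by rwa [hLφ] at hcv, rfl⟩
      · exact absurd (hLfresh v h c hcv) (Nat.not_le.mpr hcN)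
    · rintro ⟨w, hw, rfl⟩
      rwa [hLφ]
  have e2 : (Finset.univ.filter (fun v => f v = c)) =
      (Finset.univ.filter (fun w => f (φ w) = c)).image φ := by
    ext v
    simp only [Finset.mem_filter, Finset.mem_univ, true_and, Finset.mem_image]
    constructor
    · intro hcv
      by_cases h : ∃ w, φ w = v
      · obtain ⟨w, rfl⟩ := h
        exact ⟨w, hcv, rfl⟩
      · have := hLfresh v h (f v) (hfmem v)
        omega
    · rintro ⟨w, hw, rfl⟩
      exact hw
  have hcL : c ∈ palette L := by
    obtain ⟨w, -, hw⟩ := Finset.mem_biUnion.mp hc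
    exact Finset.mem_biUnion.mpr ⟨φ w, Finset.mem_univ _, by rwa [hLφ]⟩
  have hmult : mult L c = mult L' c := by
    unfold mult
    rw [e1, Finset.card_image_of_injective _ hφ]
  have hres := hfcount c hcL
  rw [hmult, e2, Finset.card_image_of_injective _ hφ] at hres
  simpa [Function.comp] using hres

/-- Every graph is proportionally `2|V|`-choosable. -/
lemma pc_twice_card {V : Type*} [Fintype V] (G : SimpleGraph V) :
    ProportionallyChoosable G (2 * Fintype.card V) := by
  classical
  intro L hL
  have hall : ∀ s : Finset V, s.card ≤ (s.biUnion L).card := by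
    intro s
    rcases s.eq_empty_or_nonempty with rfl | ⟨v, hv⟩
    · simp
    · calc s.card ≤ Fintype.card V := Finset.card_le_univ s
        _ ≤ 2 * Fintype.card V := by omega
        _ = (L v).card := (hL v).symm
        _ ≤ (s.biUnion L).card :=
          Finset.card_le_card (Finset.subset_biUnion_of_mem L hv)
  obtain ⟨f, hfinj, hfmem⟩ := (Finset.all_card_le_biUnion_card_iff_exists_injective L).mp hall
  refine ⟨f, ⟨⟨hfmem, fun u w h hfe => (G.ne_of_adj h) (hfinj hfe)⟩, ?_⟩⟩
  intro c hc
  have hcount : (Finset.univ.filter (fun v => f v = c)).card ≤ 1 := by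
    refine Finset.card_le_one.mpr ?_
    intro a ha b hb
    simp only [Finset.mem_filter] at ha hb
    exact hfinj (ha.2.trans hb.2.symm)
  have hmultle : mult L c ≤ Fintype.card V := by
    unfold mult
    simpa using Finset.card_filter_le Finset.univ (fun v => c ∈ L v)
  have hmultpos : 1 ≤ mult L c := by
    obtain ⟨v, -, hv⟩ := Finset.mem_biUnion.mp hc
    exact Finset.card_pos.mpr ⟨v, Finset.mem_filter.mpr ⟨Finset.mem_univ v, hv⟩⟩
  have hn : 1 ≤ Fintype.card V := hmultpos.trans hmultle
  rcases Nat.le_one_iff_eq_zero_or_eq_one.mp hcount with h0 | h1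
  · left
    rw [h0]
    exact (Nat.div_eq_of_lt (by omega)).symm
  · right
    rw [h1]
    refine (Nat.div_eq_of_lt_le (by omega) (by omega)).symm

/-- If `H` embeds as a subgraph of `G` (via an injective map preserving
adjacency), then proportional `k`-choosability of `G` implies that of `H`, and
`χ_pc(H) ≤ χ_pc(G)`. -/
theorem stmt4 {V W : Type*} [Fintype V] [Fintype W] (G : SimpleGraph V)
    (H : SimpleGraph W) (φ : W → V) (hφ : Function.Injective φ)
    (hsub : ∀ ⦃u w⦄, H.Adj u w → G.Adj (φ u) (φ w)) :
    (∀ k : ℕ, ProportionallyChoosable G k → ProportionallyChoosable H k) ∧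
      propChoiceNumber H ≤ propChoiceNumber G := by
  have mono : ∀ k : ℕ, ProportionallyChoosable G k → ProportionallyChoosable H k :=
    fun k hk => pc_mono G H φ hφ hsub k hk
  refine ⟨mono, ?_⟩
  have hne : {k | ProportionallyChoosable G k}.Nonempty :=
    ⟨2 * Fintype.card V, pc_twice_card G⟩
  have hmem := Nat.sInf_mem hne
  exact Nat.sInf_le (mono _ hmem)
end

section
/- Let G be a graph and L a k-assignment for G such that every color c in the palette satisfies η_L(c) < 2k. If there exists a proper L-coloring of G in which every color c is used at most ⌈η_L(c)/k⌉ times, then G has a proportional L-coloring. -/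
open Finset SimpleGraph

lemma chain_dedup_aux {α : Type*} (r : α → α → Prop) :
    ∀ (n : ℕ) (l : List α) (a b : α), l.length ≤ n → List.Chain r a l →
      l.getLastD a = b →
      ∃ l', List.Chain r a l' ∧ l'.getLastD a = b ∧ (a :: l').Nodup ∧ ∀ x ∈ l', x ∈ l := by
  intro n
  induction n with
  | zero =>
    intro l a b hlen _ hb
    rw [List.length_eq_zero_iff.1 (Nat.le_zero.1 hlen)] at hb ⊢
    exact ⟨[], List.Chain.nil, hb, List.nodup_singleton a, by simp⟩
  | succ n ih =>
    intro l a b hlen hc hb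
    by_cases ha : a ∈ l
    · obtain ⟨l₁, l₂, rfl⟩ := List.append_of_mem ha
      have hc2 : List.Chain r a l₂ := (List.isChain_cons_split.1 hc).2
      have hb2 : l₂.getLastD a = b := by
        rw [← hb]
        simp [List.getLastD_eq_getLast?, List.getLast?_append, List.getLast?_cons]
      have hlen2 : l₂.length ≤ n := by simp at hlen; omega
      obtain ⟨l', h1, h2, h3, h4⟩ := ih l₂ a b hlen2 hc2 hb2
      exact ⟨l', h1, h2, h3, fun x hx => by
        simp only [List.mem_append, List.mem_cons]; exact Or.inr (Or.inr (h4 x hx))⟩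
    · match l, hlen, hc, hb, ha with
      | [], _, _, hb, _ => exact ⟨[], List.Chain.nil, hb, List.nodup_singleton a, by simp⟩
      | c :: t, hlen, hc, hb, ha =>
        simp only [List.Chain, List.chain_cons] at hc
        have hbt : t.getLastD c = b := by rw [← hb, List.getLastD_cons]
        have hlent : t.length ≤ n := by simp at hlen; omega
        obtain ⟨t', h1, h2, h3, h4⟩ := ih t c b hlent hc.2 hbt
        refine ⟨c :: t', List.chain_cons.2 ⟨hc.1, h1⟩, by rw [List.getLastD_cons]; exact h2,
          ?_, ?_⟩
        · refine List.nodup_cons.2 ⟨?_, h3⟩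
          intro hmem
          rcases List.mem_cons.1 hmem with h | h
          · exact ha (h ▸ List.mem_cons_self (a := c) (l := t))
          · exact ha (List.mem_cons.2 (Or.inr (h4 a h)))
        · intro x hx
          rcases List.mem_cons.1 hx with h | h
          · exact h ▸ List.mem_cons_self (a := c) (l := t)
          · exact List.mem_cons.2 (Or.inr (h4 x h))

lemma chain_dedup {α : Type*} (r : α → α → Prop) (l : List α) (a b : α)
    (hc : List.Chain r a l) (hb : l.getLastD a = b) :
    ∃ l', List.Chain r a l' ∧ l'.getLastD a = b ∧ (a :: l').Nodup ∧ ∀ x ∈ l', x ∈ l :=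
  chain_dedup_aux r l.length l a b le_rfl hc hb

lemma chain_imp_mem {α : Type*} {r r' : α → α → Prop} :
    ∀ (l : List α) (a : α), List.Chain r a l →
      (∀ x ∈ l, ∀ y, r y x → r' y x) → List.Chain r' a l := by
  intro l
  induction l with
  | nil => exact fun a _ _ => List.Chain.nil
  | cons c t ih =>
    intro a h hmem
    simp only [List.Chain, List.chain_cons] at h ⊢
    exact ⟨hmem c (List.mem_cons_self (a := c) (l := t)) a h.1,
      ih c h.2 fun x hx y hy => hmem x (List.mem_cons.2 (Or.inr hx)) y hy⟩
open Finset SimpleGraph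


lemma cnt_update {V : Type*} [Fintype V] [DecidableEq V] (f : V → ℕ) (v : V) (a c : ℕ)
    (hne : f v ≠ a) :
    (univ.filter fun w => Function.update f v a w = c).card =
      if c = a then (univ.filter fun w => f w = c).card + 1
      else if c = f v then (univ.filter fun w => f w = c).card - 1
      else (univ.filter fun w => f w = c).card := by
  classical
  split_ifs with h1 h2
  · subst h1
    have : (univ.filter fun w => Function.update f v c w = c)
        = insert v (univ.filter fun w => f w = c) := by
      ext w
      by_cases hw : w = v <;> simp [hw, Function.update_apply]
    rw [this, card_insert_of_notMem (by simp [hne])]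
  · subst h2
    have : (univ.filter fun w => Function.update f v a w = f v)
        = (univ.filter fun w => f w = f v).erase v := by
      ext w
      by_cases hw : w = v <;> simp [hw, Function.update_apply, Ne.symm hne]
    rw [this, card_erase_of_mem (by simp)]
  · congr 1
    ext w
    by_cases hw : w = v <;> simp [hw, Function.update_apply, Ne.symm h1] <;> tauto

/-- Counting argument: from an unused heavy color, some color with a big class or a
light color is reachable. -/
lemma escape {V : Type*} [Fintype V] (L : V → Finset ℕ) (k : ℕ)
    (hL : IsKAssignment L k) (hk : 1 ≤ k) (f : V → ℕ) (hfl : ∀ v, f v ∈ L v)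
    (c0 : ℕ) (h0 : (univ.filter fun v => f v = c0).card = 0) (hm : k ≤ mult L c0) :
    ∃ c1, Relation.ReflTransGen (fun c c' => ∃ v, c ∈ L v ∧ f v = c') c0 c1 ∧
      (2 ≤ (univ.filter fun v => f v = c1).card ∨ mult L c1 < k) := by
  classical
  by_contra hcon
  push_neg at hcon
  set r : ℕ → ℕ → Prop := fun c c' => ∃ v, c ∈ L v ∧ f v = c' with hr
  set R : Finset ℕ := (palette L).filter (fun c => Relation.ReflTransGen r c0 c) with hRdef
  have hpal : ∀ c, 1 ≤ mult L c → c ∈ palette L := by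
    intro c hc
    rw [mult] at hc
    obtain ⟨v, hv⟩ := card_pos.1 hc
    exact mem_biUnion.2 ⟨v, mem_univ v, (mem_filter.1 hv).2⟩
  have hc0R : c0 ∈ R := mem_filter.2 ⟨hpal c0 (le_trans hk hm), Relation.ReflTransGen.refl⟩
  have hclosed : ∀ v c, c ∈ L v → c ∈ R → f v ∈ R := by
    intro v c hcv hcR
    refine mem_filter.2 ⟨mem_biUnion.2 ⟨v, mem_univ v, hfl v⟩, ?_⟩
    exact ((mem_filter.1 hcR).2).tail ⟨v, hcv, rfl⟩
  set W : Finset V := univ.filter (fun v => f v ∈ R) with hWdef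
  -- W.card = sum of class sizes over R
  have hWcard : W.card = ∑ c ∈ R, (univ.filter fun v => f v = c).card := by
    rw [card_eq_sum_card_fiberwise (f := f) (s := W) (t := R) (fun v hv => (mem_filter.1 hv).2)]
    refine sum_congr rfl fun c hc => ?_
    congr 1
    ext v
    simp only [hWdef, mem_filter, mem_univ, true_and]
    exact ⟨fun h => h.2, fun h => ⟨h ▸ hc, h⟩⟩
  have hsmall : ∑ c ∈ R, (univ.filter fun v => f v = c).card ≤ R.card - 1 := by
    have h1 : ∑ c ∈ R, (univ.filter fun v => f v = c).card
        = ∑ c ∈ R.erase c0, (univ.filter fun v => f v = c).card := by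
      rw [← Finset.add_sum_erase _ _ hc0R, h0, zero_add]
    rw [h1, ← Finset.card_erase_of_mem hc0R]
    refine le_trans (sum_le_card_nsmul _ _ 1 ?_) (by simp)
    intro c hc
    have := (hcon c (mem_filter.1 (mem_of_mem_erase hc)).2).1
    omega
  have hsum2 : ∑ c ∈ R, mult L c = ∑ v : V, (L v ∩ R).card := by
    unfold mult
    simp only [card_filter]
    rw [Finset.sum_comm]
    refine sum_congr rfl fun v _ => ?_
    rw [← card_filter]
    congr 1
    ext c
    simp [mem_inter, and_comm]
  have hbound : ∑ v : V, (L v ∩ R).card ≤ k * W.card := by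
    have : ∑ v : V, (L v ∩ R).card = ∑ v ∈ W, (L v ∩ R).card := by
      rw [← Finset.sum_filter_add_sum_filter_not univ (fun v => f v ∈ R)]
      have hz : ∑ v ∈ univ.filter (fun v => ¬ f v ∈ R), (L v ∩ R).card = 0 := by
        refine Finset.sum_eq_zero fun v hv => ?_
        rw [card_eq_zero, eq_empty_iff_forall_notMem]
        intro c hc
        rw [mem_inter] at hc
        exact (mem_filter.1 hv).2 (hclosed v c hc.1 hc.2)
      rw [hz, add_zero]
    rw [this, mul_comm]
    refine le_trans (sum_le_card_nsmul _ _ k ?_) (by simp)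
    intro v _
    exact le_trans (card_le_card (inter_subset_left)) (le_of_eq (hL v))
  have hge : k * R.card ≤ ∑ c ∈ R, mult L c := by
    rw [mul_comm]
    refine le_trans (le_of_eq (by simp)) (Finset.card_nsmul_le_sum _ _ k ?_)
    intro c hc
    exact (hcon c (mem_filter.1 hc).2).2
  have hfinal : k * R.card ≤ k * (R.card - 1) := by
    calc k * R.card ≤ ∑ c ∈ R, mult L c := hge
    _ ≤ k * W.card := hsum2 ▸ hbound
    _ ≤ k * (R.card - 1) := Nat.mul_le_mul_left k (hWcard ▸ hsmall)
  have hpos : 1 ≤ R.card := card_pos.2 ⟨c0, hc0R⟩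
  have := Nat.mul_le_mul_left k (show R.card - 1 + 1 ≤ R.card by omega)
  nlinarith [hfinal, hpos, hk]

/-- Recoloring along a chain: absorb a hole at `c0` without losing heavy colors. -/
lemma absorb {V : Type*} [Fintype V] (G : SimpleGraph V) (L : V → Finset ℕ) (k : ℕ)
    (hk : 1 ≤ k) :
    ∀ (l : List ℕ) (f : V → ℕ), IsProperListColoring G L f →
      (∀ c, (univ.filter fun v => f v = c).card ≤ (mult L c + k - 1) / k) →
      ∀ c0 c1, (univ.filter fun v => f v = c0).card = 0 → k ≤ mult L c0 →
      List.Chain (fun c c' => ∃ v, c ∈ L v ∧ f v = c') c0 l →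
      l.getLastD c0 = c1 →
      (2 ≤ (univ.filter fun v => f v = c1).card ∨ mult L c1 < k) →
      (c0 :: l).Nodup →
      ∃ f', IsProperListColoring G L f' ∧
        (∀ c, (univ.filter fun v => f' v = c).card ≤ (mult L c + k - 1) / k) ∧
        1 ≤ (univ.filter fun v => f' v = c0).card ∧
        ∀ c, k ≤ mult L c → 1 ≤ (univ.filter fun v => f v = c).card →
          1 ≤ (univ.filter fun v => f' v = c).card := by
  classical
  intro l
  induction l with
  | nil =>
    intro f hproper hbd c0 c1 h0 hm _ hlast hbad _
    simp only [List.getLastD] at hlast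
    subst hlast
    rcases hbad with hbad | hbad
    · omega
    · omega
  | cons c2 t ih =>
    intro f hproper hbd c0 c1 h0 hm hchain hlast hbad hnd
    simp only [List.Chain, List.chain_cons] at hchain
    obtain ⟨⟨v, hv0, hfv⟩, hchain2⟩ := hchain
    have hlast2 : t.getLastD c2 = c1 := by rw [← hlast, List.getLastD_cons]
    -- basic facts
    have hnobody : ∀ x, f x ≠ c0 := by
      intro x hx
      have : x ∈ univ.filter fun v => f v = c0 := by simp [hx]
      rw [card_eq_zero] at h0
      simp [h0] at this
    have hc2ne : c2 ≠ c0 := fun h => hnobody v (h ▸ hfv)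
    have hc2pos : 1 ≤ (univ.filter fun w => f w = c2).card :=
      card_pos.2 ⟨v, by simp [hfv]⟩
    set f1 : V → ℕ := Function.update f v c0 with hf1
    have hfvne : f v ≠ c0 := hnobody v
    have hcnt : ∀ c, (univ.filter fun w => f1 w = c).card =
        if c = c0 then (univ.filter fun w => f w = c).card + 1
        else if c = c2 then (univ.filter fun w => f w = c).card - 1
        else (univ.filter fun w => f w = c).card := by
      intro c
      rw [hf1, cnt_update f v c0 c hfvne, hfv]
    have hproper1 : IsProperListColoring G L f1 := by
      constructor
      · intro w
        by_cases hw : w = v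
        · subst hw; simpa [hf1] using hv0
        · simpa [hf1, Function.update_apply, hw] using hproper.1 w
      · intro u w huw heq
        have hneuw : u ≠ w := G.ne_of_adj huw
        by_cases hu : u = v <;> by_cases hw : w = v
        · exact hneuw (hu.trans hw.symm)
        · subst hu
          rw [hf1] at heq
          simp [Function.update_apply, hw] at heq
          exact hnobody w heq.symm
        · subst hw
          rw [hf1] at heq
          simp [Function.update_apply, hu] at heq
          exact hnobody u heq
        · rw [hf1] at heq
          simp [Function.update_apply, hu, hw] at heq
          exact hproper.2 huw heq
    have hceil0 : 1 ≤ (mult L c0 + k - 1) / k := by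
      rw [Nat.one_le_div_iff hk]; omega
    have hbd1 : ∀ c, (univ.filter fun v => f1 v = c).card ≤ (mult L c + k - 1) / k := by
      intro c
      rw [hcnt c]
      split_ifs with h1 h2
      · subst h1; omega
      · exact le_trans (Nat.sub_le _ _) (hbd c)
      · exact hbd c
    by_cases hbad2 : 2 ≤ (univ.filter fun w => f w = c2).card ∨ mult L c2 < k
    · -- stop here: use f1
      refine ⟨f1, hproper1, hbd1, ?_, ?_⟩
      · rw [hcnt c0]; simp [h0]
      · intro c hmc hc
        rw [hcnt c]
        split_ifs with h1 h2
        · omega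
        · subst h2
          rcases hbad2 with h | h
          · omega
          · omega
        · exact hc
    · push_neg at hbad2
      obtain ⟨hcnt2, hm2⟩ := hbad2
      have hcnt2' : (univ.filter fun w => f w = c2).card = 1 := by omega
      have h02 : (univ.filter fun w => f1 w = c2).card = 0 := by
        rw [hcnt c2, if_neg hc2ne, if_pos rfl, hcnt2']
      -- transfer the chain to f1
      have hndt : (c2 :: t).Nodup := (List.nodup_cons.1 hnd).2
      have hc0nt : c0 ∉ c2 :: t := (List.nodup_cons.1 hnd).1
      have hchain1 : List.Chain (fun c c' => ∃ w, c ∈ L w ∧ f1 w = c') c2 t := by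
        refine chain_imp_mem t c2 hchain2 ?_
        rintro x hx y ⟨w, hyw, hfw⟩
        refine ⟨w, hyw, ?_⟩
        have hwv : w ≠ v := by
          intro h
          subst h
          rw [hfw] at hfv
          exact (List.nodup_cons.1 hndt).1 (hfv ▸ hx)
        rw [hf1, Function.update_apply, if_neg hwv, hfw]
      have hc1ne0 : c1 ≠ c0 := by
        intro h
        have : c1 ∈ c2 :: t := hlast2 ▸ List.getLastD_mem_cons (l := t) (a := c2)
        exact hc0nt (h ▸ this)
      have hc1ne2 : c1 ≠ c2 := by
        intro h
        subst h
        rcases hbad with hb | hb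
        · omega
        · omega
      have hbad1 : 2 ≤ (univ.filter fun w => f1 w = c1).card ∨ mult L c1 < k := by
        rcases hbad with hb | hb
        · left; rw [hcnt c1, if_neg hc1ne0, if_neg hc1ne2]; exact hb
        · right; exact hb
      obtain ⟨f', hp', hb', h1', hpres⟩ :=
        ih f1 hproper1 hbd1 c2 c1 h02 hm2 hchain1 hlast2 hbad1 hndt
      refine ⟨f', hp', hb', ?_, ?_⟩
      · refine hpres c0 hm ?_
        rw [hcnt c0]; simp [h0]
      · intro c hmc hc
        by_cases hcc2 : c = c2
        · exact hcc2 ▸ h1'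
        · refine hpres c hmc ?_
          rw [hcnt c]
          by_cases h1 : c = c0
          · simp [h1]
          · rw [if_neg h1, if_neg hcc2]; exact hc



/-- If `L` is a `k`-assignment with every color of multiplicity `< 2k`,
and there is a proper `L`-coloring using every color at most `⌈η(c)/k⌉` times,
then `G` has a proportional `L`-coloring. -/
theorem stmt6 {V : Type*} [Fintype V] (G : SimpleGraph V) (L : V → Finset ℕ) (k : ℕ)
    (hL : IsKAssignment L k) (hmult : ∀ c ∈ palette L, mult L c < 2 * k)
    (hf : ∃ f : V → ℕ, IsProperListColoring G L f ∧
      ∀ c, (Finset.univ.filter (fun v => f v = c)).card ≤ (mult L c + k - 1) / k) :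
    ∃ f, IsProportionalColoring G L k f := by
  classical
  obtain ⟨f0, hf0p, hf0b⟩ := hf
  by_cases hk0 : k = 0
  · refine ⟨f0, hf0p, fun c hc => ?_⟩
    obtain ⟨v, _, hcv⟩ := mem_biUnion.1 hc
    have := hL v
    rw [hk0, card_eq_zero] at this
    simp [this] at hcv
  have hk : 1 ≤ k := Nat.one_le_iff_ne_zero.2 hk0
  have hpal : ∀ c, 1 ≤ mult L c → c ∈ palette L := by
    intro c hc
    rw [mult] at hc
    obtain ⟨v, hv⟩ := card_pos.1 hc
    exact mem_biUnion.2 ⟨v, mem_univ v, (mem_filter.1 hv).2⟩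
  -- the deficiency count
  set d : (V → ℕ) → ℕ := fun f =>
    ((palette L).filter fun c => k ≤ mult L c ∧ (univ.filter fun v => f v = c).card = 0).card
    with hd
  set S : Set ℕ := {n | ∃ f, (IsProperListColoring G L f ∧
      ∀ c, (univ.filter fun v => f v = c).card ≤ (mult L c + k - 1) / k) ∧ d f = n} with hS
  have hne : S.Nonempty := ⟨d f0, f0, ⟨hf0p, hf0b⟩, rfl⟩
  obtain ⟨f, ⟨hfp, hfb⟩, hdf⟩ := Nat.sInf_mem hne
  have hzero : d f = 0 := by
    by_contra hpos
    have hpos' : 0 < d f := Nat.pos_of_ne_zero hpos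
    obtain ⟨c0, hc0⟩ := card_pos.1 hpos'
    obtain ⟨hc0pal, hm0, h00⟩ := mem_filter.1 hc0
    obtain ⟨c1, hrtg, hbad⟩ := escape L k hL hk f hfp.1 c0 h00 hm0
    obtain ⟨l, hchain, hlastg⟩ := List.exists_isChain_cons_of_relationReflTransGen hrtg
    rw [List.getLast_eq_getLastD] at hlastg
    obtain ⟨l', hchain', hlast', hnd', _⟩ :=
      chain_dedup (fun c c' => ∃ v, c ∈ L v ∧ f v = c') l c0 c1 hchain hlastg
    obtain ⟨f', hp', hb', h1', hpres⟩ :=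
      absorb G L k hk l' f hfp hfb c0 c1 h00 hm0 hchain' hlast' hbad hnd'
    have hsub : ((palette L).filter fun c => k ≤ mult L c ∧
          (univ.filter fun v => f' v = c).card = 0) ⊂
        ((palette L).filter fun c => k ≤ mult L c ∧
          (univ.filter fun v => f v = c).card = 0) := by
      constructor
      · intro c hcmem
        obtain ⟨hcp, hmc, hc0'⟩ := mem_filter.1 hcmem
        refine mem_filter.2 ⟨hcp, hmc, ?_⟩
        by_contra hne0
        have : 1 ≤ (univ.filter fun v => f v = c).card := Nat.one_le_iff_ne_zero.2 hne0
        have := hpres c hmc this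
        omega
      · intro hsub'
        have := hsub' hc0
        obtain ⟨_, _, h⟩ := mem_filter.1 this
        omega
    have hlt : d f' < d f := card_lt_card hsub
    have hmem : d f' ∈ S := ⟨f', ⟨hp', hb'⟩, rfl⟩
    have := Nat.sInf_le hmem
    omega
  have hhit : ∀ c, k ≤ mult L c → 1 ≤ (univ.filter fun v => f v = c).card := by
    intro c hmc
    by_contra h
    have h0 : (univ.filter fun v => f v = c).card = 0 := by omega
    have : c ∈ (palette L).filter fun c => k ≤ mult L c ∧
        (univ.filter fun v => f v = c).card = 0 :=
      mem_filter.2 ⟨hpal c (le_trans hk hmc), hmc, h0⟩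
    have hcp := card_pos.2 ⟨c, this⟩
    have hz2 : ((palette L).filter fun c => k ≤ mult L c ∧
        (univ.filter fun v => f v = c).card = 0).card = 0 := hzero
    omega
  refine ⟨f, hfp, fun c hc => ?_⟩
  have hm1 : 1 ≤ mult L c := by
    obtain ⟨v, _, hcv⟩ := mem_biUnion.1 hc
    exact card_pos.2 ⟨v, mem_filter.2 ⟨mem_univ v, hcv⟩⟩
  have h2k := hmult c hc
  have hbd := hfb c
  set n := (univ.filter fun v => f v = c).card with hn
  set a := mult L c / k with ha
  set b := (mult L c + k - 1) / k with hb
  by_cases hcm : k ≤ mult L c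
  · have ha1 : a = 1 := by
      have h1 : 1 ≤ a := (Nat.one_le_div_iff hk).2 hcm
      have h2 : a < 2 := (Nat.div_lt_iff_lt_mul hk).2 (by omega)
      omega
    have hb2 : b ≤ 2 := by
      have : b < 3 := (Nat.div_lt_iff_lt_mul hk).2 (by omega)
      omega
    have hn1 : 1 ≤ n := hhit c hcm
    omega
  · push_neg at hcm
    have ha0 : a = 0 := Nat.div_eq_of_lt hcm
    have hb1 : b = 1 := by
      have h1 : 1 ≤ b := (Nat.one_le_div_iff hk).2 (by omega)
      have h2 : b < 2 := (Nat.div_lt_iff_lt_mul hk).2 (by omega)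
      omega
    omega
end

section
/- For all natural numbers n, m ≥ 1, if L is a k-assignment for the complete bipartite graph K_{n,m} such that η_L(c) ≤ k for every color c in the palette, then K_{n,m} has a proportional L-coloring. -/
open Finset SimpleGraph

lemma sum_mult_eq {V : Type*} [Fintype V] [DecidableEq V] (L : V → Finset ℕ) (C : Finset ℕ) :
    ∑ c ∈ C, mult L c = ∑ v : V, ((L v) ∩ C).card := by
  simp only [mult, Finset.card_filter]
  rw [Finset.sum_comm]
  refine Finset.sum_congr rfl fun v _ => ?_
  rw [← Finset.card_filter]
  congr 1
  ext c
  simp [and_comm]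

/-- For `n, m ≥ 1`, if `L` is a `k`-assignment (`k ≥ 1`) for `K_{n,m}` with
every color of multiplicity at most `k`, then `K_{n,m}` has a proportional `L`-coloring. -/
theorem stmt7 (n m k : ℕ) (hn : 1 ≤ n) (hm : 1 ≤ m) (hk : 1 ≤ k)
    (L : (Fin n ⊕ Fin m) → Finset ℕ) (hL : IsKAssignment L k)
    (hmult : ∀ c, mult L c ≤ k) :
    ∃ f, IsProportionalColoring (KBip n m) L k f := by
  classical
  set N := n + m with hN
  set P := palette L with hP
  have hsub : ∀ v : Fin n ⊕ Fin m, L v ⊆ P := fun v => Finset.subset_biUnion_of_mem L (Finset.mem_univ v)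
  have hcardV : Fintype.card (Fin n ⊕ Fin m) = N := by simp [hN]
  -- total count
  have htotal : ∑ c ∈ P, mult L c = N * k := by
    rw [sum_mult_eq]
    have : ∀ v : Fin n ⊕ Fin m, (L v ∩ P).card = k := by
      intro v
      rw [Finset.inter_eq_left.mpr (hsub v), hL v]
    rw [Finset.sum_congr rfl fun v _ => this v]
    simp [hcardV]
  have hPN : N ≤ P.card := by
    have h2 : ∑ c ∈ P, mult L c ≤ P.card * k := by
      calc ∑ c ∈ P, mult L c ≤ ∑ _c ∈ P, k := Finset.sum_le_sum fun c _ => hmult c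
        _ = P.card * k := by rw [Finset.sum_const, smul_eq_mul]
    rw [htotal] at h2
    exact Nat.le_of_mul_le_mul_right h2 hk
  set K := P.filter (fun c => mult L c = k) with hKdef
  have hKP : K ⊆ P := Finset.filter_subset _ _
  -- the lower Hall bound for vertex sets
  have hlow : ∀ S : Finset (Fin n ⊕ Fin m), S.card * k ≤ ∑ c ∈ S.biUnion L, mult L c := by
    intro S
    rw [sum_mult_eq]
    calc S.card * k = ∑ v ∈ S, k := by rw [Finset.sum_const, smul_eq_mul]
      _ = ∑ v ∈ S, (L v ∩ S.biUnion L).card := by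
          refine Finset.sum_congr rfl fun v hv => ?_
          rw [Finset.inter_eq_left.mpr (fun c hc => Finset.mem_biUnion.mpr ⟨v, hv, hc⟩), hL v]
      _ ≤ ∑ v : Fin n ⊕ Fin m, (L v ∩ S.biUnion L).card :=
          Finset.sum_le_sum_of_subset (Finset.subset_univ S)
  -- key deficiency bound
  have hkey : ∀ S : Finset (Fin n ⊕ Fin m), S.card + (K \ S.biUnion L).card ≤ N := by
    intro S
    have hSle : S.card ≤ N := by
      calc S.card ≤ Fintype.card (Fin n ⊕ Fin m) := Finset.card_le_univ S
        _ = N := hcardV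
    have h1 : (K \ S.biUnion L).card * k = ∑ c ∈ K \ S.biUnion L, mult L c := by
      rw [Finset.sum_congr rfl (fun c hc => ?_), Finset.sum_const, smul_eq_mul]
      exact (Finset.mem_filter.mp (Finset.mem_sdiff.mp hc).1).2
    have h2 : ∑ c ∈ K \ S.biUnion L, mult L c ≤ (N - S.card) * k := by
      rw [sum_mult_eq]
      have hz : ∀ v ∈ S, (L v ∩ (K \ S.biUnion L)).card = 0 := by
        intro v hv
        rw [Finset.card_eq_zero, Finset.eq_empty_iff_forall_notMem]
        intro c hc
        rw [Finset.mem_inter, Finset.mem_sdiff] at hc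
        exact hc.2.2 (Finset.mem_biUnion.mpr ⟨v, hv, hc.1⟩)
      calc ∑ v : Fin n ⊕ Fin m, (L v ∩ (K \ S.biUnion L)).card
          = ∑ v ∈ Finset.univ \ S, (L v ∩ (K \ S.biUnion L)).card := by
            rw [← Finset.sum_sdiff (Finset.subset_univ S)]
            rw [Finset.sum_congr rfl (fun v hv => hz v hv)]
            simp
        _ ≤ ∑ v ∈ Finset.univ \ S, k := by
            refine Finset.sum_le_sum fun v _ => ?_
            calc (L v ∩ (K \ S.biUnion L)).card ≤ (L v).card :=
                  Finset.card_le_card (Finset.inter_subset_left)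
              _ = k := hL v
        _ = (N - S.card) * k := by
            rw [Finset.sum_const, smul_eq_mul, Finset.card_sdiff_of_subset (Finset.subset_univ S),
              Finset.card_univ, hcardV]
    have h3 : (K \ S.biUnion L).card * k ≤ (N - S.card) * k := h1 ▸ h2
    have h4 : (K \ S.biUnion L).card ≤ N - S.card := Nat.le_of_mul_le_mul_right h3 hk
    omega
  -- the Hall instance
  set D := Fin (P.card - N) with hD
  set t : ((Fin n ⊕ Fin m) ⊕ D) → Finset ℕ := Sum.elim L (fun _ => P \ K) with ht
  clear_value K P N
  have hall : ∀ s : Finset ((Fin n ⊕ Fin m) ⊕ D), s.card ≤ (s.biUnion t).card := by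
    intro s
    have hBsub : s.toLeft.biUnion L ⊆ s.biUnion t := by
      intro c hc
      obtain ⟨v, hv, hcv⟩ := Finset.mem_biUnion.mp hc
      exact Finset.mem_biUnion.mpr ⟨Sum.inl v, Finset.mem_toLeft.mp hv, hcv⟩
    have hcards : s.toLeft.card + s.toRight.card = s.card := Finset.card_toLeft_add_card_toRight
    rcases Finset.eq_empty_or_nonempty s.toRight with hR | ⟨d, hd⟩
    · -- only real vertices
      have h1 : s.toLeft.card * k ≤ (s.toLeft.biUnion L).card * k := by
        calc s.toLeft.card * k ≤ ∑ c ∈ s.toLeft.biUnion L, mult L c := hlow _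
          _ ≤ ∑ _c ∈ s.toLeft.biUnion L, k := Finset.sum_le_sum fun c _ => hmult c
          _ = (s.toLeft.biUnion L).card * k := by rw [Finset.sum_const, smul_eq_mul]
      have h2 : s.toLeft.card ≤ (s.toLeft.biUnion L).card := Nat.le_of_mul_le_mul_right h1 hk
      have h4 : s.card = s.toLeft.card := by
        rw [hR, Finset.card_empty] at hcards
        omega
      rw [h4]
      exact h2.trans (Finset.card_le_card hBsub)
    · -- some dummy present
      have hPKsub : P \ K ⊆ s.biUnion t :=
        fun c hc => Finset.mem_biUnion.mpr ⟨Sum.inr d, Finset.mem_toRight.mp hd, hc⟩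
      have hU : (P \ K) ∪ (K ∩ s.toLeft.biUnion L) ⊆ s.biUnion t := by
        refine Finset.union_subset hPKsub ?_
        exact fun c hc => hBsub (Finset.mem_inter.mp hc).2
      have hdisj : Disjoint (P \ K) (K ∩ s.toLeft.biUnion L) := by
        refine Finset.disjoint_left.mpr fun c hc hc' => ?_
        exact (Finset.mem_sdiff.mp hc).2 (Finset.mem_inter.mp hc').1
      have hUcard : (P \ K).card + (K ∩ s.toLeft.biUnion L).card ≤ (s.biUnion t).card := by
        rw [← Finset.card_union_of_disjoint hdisj]
        exact Finset.card_le_card hU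
      have hPK : (P \ K).card = P.card - K.card := Finset.card_sdiff_of_subset hKP
      have hKsplit : (K \ s.toLeft.biUnion L).card + (K ∩ s.toLeft.biUnion L).card = K.card := Finset.card_sdiff_add_card_inter K _
      have hDle : s.toRight.card ≤ P.card - N := by
        calc s.toRight.card ≤ Fintype.card D := Finset.card_le_univ _
          _ = P.card - N := by simp [hD]
      have hk1 := hkey s.toLeft
      have hKcard : K.card ≤ P.card := Finset.card_le_card hKP
      omega
  obtain ⟨F, hFinj, hFmem⟩ := (Finset.all_card_le_biUnion_card_iff_exists_injective t).mp hall
  set f : (Fin n ⊕ Fin m) → ℕ := fun v => F (Sum.inl v) with hf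
  have hfinj : Function.Injective f := fun a b hab => Sum.inl_injective (hFinj hab)
  have hfL : ∀ v, f v ∈ L v := fun v => hFmem (Sum.inl v)
  have hFP : ∀ i, F i ∈ P := by
    intro i
    rcases i with v | d
    · exact hsub v (hFmem (Sum.inl v))
    · exact (Finset.mem_sdiff.mp (hFmem (Sum.inr d))).1
  have hcount_le : ∀ c, (Finset.univ.filter (fun v => f v = c)).card ≤ 1 := by
    intro c
    refine Finset.card_le_one.mpr fun a ha b hb => ?_
    rw [Finset.mem_filter] at ha hb
    exact hfinj (ha.2.trans hb.2.symm)
  -- surjectivity onto the palette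
  have himg : Finset.image F Finset.univ = P := by
    refine Finset.eq_of_subset_of_card_le ?_ ?_
    · intro c hc
      obtain ⟨i, _, rfl⟩ := Finset.mem_image.mp hc
      exact hFP i
    · rw [Finset.card_image_of_injective _ hFinj, Finset.card_univ]
      simp only [Fintype.card_sum, hcardV]
      have : Fintype.card D = P.card - N := by simp [hD]
      rw [this]
      omega
  refine ⟨f, ⟨hfL, ?_⟩, ?_⟩
  · intro u w huw hce
    exact (KBip n m).irrefl (hfinj hce ▸ huw)
  · intro c hc
    have hc1 : 1 ≤ mult L c := by
      obtain ⟨v, _, hv⟩ := Finset.mem_biUnion.mp hc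
      refine Finset.card_pos.mpr ⟨v, ?_⟩
      simp [mult, hv]
    by_cases hck : mult L c = k
    · left
      have hcP : c ∈ P := by rw [hP]; exact hc
      have hcK : c ∈ K := by rw [hKdef]; exact Finset.mem_filter.mpr ⟨hcP, hck⟩
      have : c ∈ Finset.image F Finset.univ := by rw [himg]; exact hcP
      obtain ⟨i, _, hi⟩ := Finset.mem_image.mp this
      rcases i with v | d
      · have hpos : 0 < (Finset.univ.filter (fun v => f v = c)).card :=
          Finset.card_pos.mpr ⟨v, Finset.mem_filter.mpr ⟨Finset.mem_univ v, hi⟩⟩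
        have := hcount_le c
        rw [hck, Nat.div_self hk]
        omega
      · exact absurd hcK (Finset.mem_sdiff.mp (hi ▸ hFmem (Sum.inr d))).2
    · have hlt : mult L c < k := lt_of_le_of_ne (hmult c) hck
      have := hcount_le c
      interval_cases h : (Finset.univ.filter (fun v => f v = c)).card
      · left
        rw [Nat.div_eq_of_lt hlt]
      · right
        rw [Nat.div_eq_of_lt_le (by omega : 1 * k ≤ mult L c + k - 1)
          (by omega : mult L c + k - 1 < (1 + 1) * k)]
end

section
/- Let G = K_{n_1,…,n_t} be a complete t-partite graph with t ≥ 2 and n_i ≥ 1 for all i, and let s = Σ_{i=1}^t ⌈n_i/2⌉. Then G is not proportionally (s−1)-choosable; consequently χ_pc(K_{n_1,…,n_t}) ≥ Σ_{i=1}^t ⌈n_i/2⌉. -/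
open Finset SimpleGraph

-- auxiliary
lemma card_filter_val_lt (n m : ℕ) (h : m ≤ n) :
    ((Finset.univ : Finset (Fin n)).filter (fun x => x.val < m)).card = m := by
  classical
  rw [← Finset.card_range m]
  apply Finset.card_bij (fun (x : Fin n) _ => x.val)
  · intro a ha
    simp only [Finset.mem_filter] at ha
    simpa using ha.2
  · intro a ha b hb hab
    exact Fin.ext hab
  · intro b hb
    simp only [Finset.mem_range] at hb
    exact ⟨⟨b, lt_of_lt_of_le hb h⟩, by simp [hb], rfl⟩

lemma core {t : ℕ} (ht : 0 < t) (n : Fin t → ℕ) (k : ℕ) (hk : 0 < k)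
    (u : Fin t → ℕ) (hun : ∀ i, u i ≤ n i)
    (hkm : k ≤ ∑ i, u i) (hm2k : ∑ i, u i ≤ 2 * k)
    (hfloor : (∑ i, u i / 2) + k < ∑ i, u i) :
    ¬ ProportionallyChoosable (completeMultipartiteGraph (fun i : Fin t => Fin (n i))) k := by
  classical
  intro hch
  set m := ∑ i, u i with hm
  set U : Finset ((i : Fin t) × Fin (n i)) :=
    Finset.univ.sigma (fun i => Finset.univ.filter (fun x : Fin (n i) => x.val < u i)) with hU
  have hUcard : U.card = m := by
    rw [hU, Finset.card_sigma]
    exact Finset.sum_congr rfl (fun i _ => card_filter_val_lt _ _ (hun i))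
  have hmemU : ∀ v : (i : Fin t) × Fin (n i), v ∈ U ↔ v.2.val < u v.1 := by
    intro v; cases v with
    | mk i x => simp [hU, Finset.mem_sigma]
  set T := Finset.range k with hT
  set T' := (Finset.range k).image (fun c => k + c) with hT'
  have hT'card : T'.card = k := by
    rw [hT', Finset.card_image_of_injective _ (add_right_injective k), Finset.card_range]
  set L : ((i : Fin t) × Fin (n i)) → Finset ℕ := fun v => if v ∈ U then T else T' with hL
  have hLk : IsKAssignment L k := by
    intro v; by_cases h : v ∈ U <;> simp [hL, h, hT'card, hT]
  obtain ⟨f, ⟨hfmem, hfprop⟩, hfcount⟩ := hch L hLk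
  have hTT' : ∀ c, c ∈ T → c ∉ T' := by
    intro c hc hc'
    rw [hT, Finset.mem_range] at hc
    rw [hT'] at hc'
    simp only [Finset.mem_image, Finset.mem_range] at hc'
    omega
  have hfT : ∀ v, v ∈ U → f v ∈ T := by
    intro v hv; have h := hfmem v; simpa only [hL, if_pos hv] using h
  have hfT' : ∀ v, v ∉ U → f v ∉ T := by
    intro v hv hmem; have h := hfmem v; simp only [hL, if_neg hv] at h
    exact hTT' _ hmem h
  have hUne : U.Nonempty := by
    rw [← Finset.card_pos, hUcard]; omega
  have hmult : ∀ c ∈ T, mult L c = m := by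
    intro c hc
    have he : Finset.univ.filter (fun v => c ∈ L v) = U := by
      ext v
      by_cases hv : v ∈ U <;>
        simp [hL, hv, hc, hTT' c hc]
    rw [mult, he, hUcard]
  have hpal : ∀ c ∈ T, c ∈ palette L := by
    intro c hc
    obtain ⟨v, hv⟩ := hUne
    exact Finset.mem_biUnion.2 ⟨v, Finset.mem_univ v, by simp only [hL, if_pos hv]; exact hc⟩
  set Nc : ℕ → ℕ := fun c => (Finset.univ.filter (fun v => f v = c)).card with hNc
  have hNc12 : ∀ c ∈ T, 1 ≤ Nc c ∧ Nc c ≤ 2 := by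
    intro c hc
    have h := hfcount c (hpal c hc)
    rw [hmult c hc] at h
    have h1 : 1 ≤ m / k := (Nat.one_le_div_iff hk).2 hkm
    have h2 : (m + k - 1) / k < 3 := by
      rw [Nat.div_lt_iff_lt_mul hk]; omega
    have h3 : m / k ≤ (m + k - 1) / k := Nat.div_le_div_right (by omega)
    have h2' : (m + k - 1) / k ≤ 2 := by omega
    rcases h with h | h
    · have hx : Nc c = m / k := h
      rw [hx]; exact ⟨h1, h3.trans h2'⟩
    · have hx : Nc c = (m + k - 1) / k := h
      rw [hx]; exact ⟨h1.trans h3, h2'⟩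
  have hfiber : ∀ c ∈ T, U.filter (fun v => f v = c) = Finset.univ.filter (fun v => f v = c) := by
    intro c hc
    ext v
    simp only [Finset.mem_filter, Finset.mem_univ, true_and]
    constructor
    · rintro ⟨-, h⟩; exact h
    · intro h
      refine ⟨?_, h⟩
      by_contra hv
      exact hfT' v hv (h ▸ hc)
  have hsum : ∑ c ∈ T, Nc c = m := by
    rw [← hUcard, Finset.card_eq_sum_card_fiberwise (fun v hv => hfT v hv)]
    exact (Finset.sum_congr rfl (fun c hc => by rw [hfiber c hc])).symm
  set P := T.filter (fun c => Nc c = 2) with hP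
  have hPcard : m ≤ k + P.card := by
    have hsplit : ∑ c ∈ T, Nc c
        = ∑ c ∈ P, Nc c + ∑ c ∈ T.filter (fun c => ¬ Nc c = 2), Nc c :=
      (Finset.sum_filter_add_sum_filter_not T _ _).symm
    have hb1 : ∑ c ∈ P, Nc c = 2 * P.card := by
      rw [Finset.sum_congr rfl (fun c hc => (Finset.mem_filter.1 hc).2)]
      simp [mul_comm]
      rfl
    have hb2 : ∑ c ∈ T.filter (fun c => ¬ Nc c = 2), Nc c
        ≤ (T.filter (fun c => ¬ Nc c = 2)).card * 1 := by
      apply Finset.sum_le_card_nsmul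
      intro c hc
      rcases Finset.mem_filter.1 hc with ⟨hcT, hc2⟩
      have := hNc12 c hcT
      omega
    have hsplitc : P.card + (T.filter (fun c => ¬ Nc c = 2)).card = k := by
      rw [hP, Finset.card_filter_add_card_filter_not, hT, Finset.card_range]
    omega
  -- the part function
  have hsamefst : ∀ v w : (i : Fin t) × Fin (n i), f v = f w → v.1 = w.1 := by
    intro v w hvw
    by_contra hne
    exact hfprop (by simpa using hne) hvw
  set g : ℕ → Fin t := fun c =>
    if h : ∃ v : (i : Fin t) × Fin (n i), f v = c then h.choose.1 else ⟨0, ht⟩ with hg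
  have hgf : ∀ v : (i : Fin t) × Fin (n i), g (f v) = v.1 := by
    intro v
    have h : ∃ w : (i : Fin t) × Fin (n i), f w = f v := ⟨v, rfl⟩
    rw [hg]
    simp only [dif_pos h]
    exact hsamefst _ _ h.choose_spec
  have hpart : ∀ i : Fin t, 2 * (P.filter (fun c => g c = i)).card ≤ u i := by
    intro i
    set Pi := P.filter (fun c => g c = i) with hPi
    set si := Finset.univ.filter (fun v : (j : Fin t) × Fin (n j) => f v ∈ Pi) with hsi
    have hfib2 : ∀ c ∈ Pi, si.filter (fun v => f v = c) = Finset.univ.filter (fun v => f v = c) := by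
      intro c hc; ext v
      simp only [hsi, Finset.mem_filter, Finset.mem_univ, true_and]
      constructor
      · rintro ⟨-, h⟩; exact h
      · intro h; exact ⟨h ▸ hc, h⟩
    have h1 : si.card = ∑ c ∈ Pi, Nc c := by
      rw [Finset.card_eq_sum_card_fiberwise (f := f) (s := si) (t := Pi)
        (fun v hv => (Finset.mem_filter.1 hv).2)]
      exact Finset.sum_congr rfl (fun c hc => by rw [hfib2 c hc])
    have h2 : ∑ c ∈ Pi, Nc c = 2 * Pi.card := by
      rw [Finset.sum_congr rfl (fun c hc =>
        (Finset.mem_filter.1 ((Finset.mem_filter.1 hc).1)).2)]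
      simp [mul_comm]
      rfl
    have h3 : si ⊆ U.filter (fun v => v.1 = i) := by
      intro v hv
      rw [hsi, Finset.mem_filter] at hv
      have hvP : f v ∈ P := (Finset.mem_filter.1 hv.2).1
      have hvg : g (f v) = i := (Finset.mem_filter.1 hv.2).2
      have hvT : f v ∈ T := (Finset.mem_filter.1 hvP).1
      have hvU : v ∈ U := by
        by_contra hvu
        exact hfT' v hvu hvT
      exact Finset.mem_filter.2 ⟨hvU, by rw [← hvg, hgf]⟩
    have h4 : (U.filter (fun v => v.1 = i)).card = u i := by
      have he : U.filter (fun v => v.1 = i)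
          = ({i} : Finset (Fin t)).sigma
            (fun j => Finset.univ.filter (fun x : Fin (n j) => x.val < u j)) := by
        ext v
        cases v with
        | mk j x =>
          simp only [hU, Finset.mem_filter, Finset.mem_sigma, Finset.mem_univ, true_and,
            Finset.mem_singleton]
        
          tauto
      rw [he, Finset.card_sigma, Finset.sum_singleton, card_filter_val_lt _ _ (hun i)]
    have h5 : si.card ≤ u i := h4 ▸ Finset.card_le_card h3
    omega
  have hPsum : P.card = ∑ i : Fin t, (P.filter (fun c => g c = i)).card :=
    Finset.card_eq_sum_card_fiberwise (fun c _ => Finset.mem_univ _)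
  have hPle : P.card ≤ ∑ i : Fin t, u i / 2 := by
    rw [hPsum]
    apply Finset.sum_le_sum
    intro i _
    have := hpart i
    omega
  omega

lemma not_choosable {t : ℕ} (ht : 2 ≤ t) (n : Fin t → ℕ) (hn : ∀ i, 1 ≤ n i)
    (k : ℕ) (hk : k < ∑ i, (n i + 1) / 2) :
    ¬ ProportionallyChoosable (completeMultipartiteGraph (fun i : Fin t => Fin (n i))) k := by
  classical
  have ht0 : 0 < t := by omega
  rcases Nat.eq_zero_or_pos k with hk0 | hkpos
  · subst hk0
    intro hch
    obtain ⟨f, ⟨hfmem, -⟩, -⟩ := hch (fun _ => ∅) (fun v => rfl)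
    exact absurd (hfmem ⟨⟨0, ht0⟩, ⟨0, hn ⟨0, ht0⟩⟩⟩) (by simp)
  set s := ∑ i, (n i + 1) / 2 with hs
  set N := ∑ i, n i with hN
  have hsN : s ≤ N := Finset.sum_le_sum (fun i _ => by have := hn i; omega)
  have hhalf : (∑ i, n i / 2) + s = N := by
    rw [hs, hN, ← Finset.sum_add_distrib]
    exact Finset.sum_congr rfl (fun i _ => by omega)
  by_cases hN2k : N ≤ 2 * k
  · exact core ht0 n k hkpos n (fun i => le_rfl) (by omega) (by omega) (by omega)
  by_cases hbig : ∃ p, 2 * k - 1 ≤ n p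
  · obtain ⟨p, hp⟩ := hbig
    obtain ⟨q, hq⟩ : ∃ q : Fin t, q ≠ p := by
      rcases Decidable.em (p = ⟨0, ht0⟩) with h | h
      · refine ⟨⟨1, by omega⟩, ?_⟩
        rw [h]
        simp [Fin.ext_iff]
      · exact ⟨⟨0, ht0⟩, fun hc => h hc.symm⟩
    set u : Fin t → ℕ := fun i => if i = p then 2 * k - 1 else if i = q then 1 else 0 with hu
    have hup : u p = 2 * k - 1 := by simp [hu]
    have huq : u q = 1 := by simp [hu, hq]
    have hzero : ∀ x ∈ (Finset.univ : Finset (Fin t)), x ∉ ({p, q} : Finset (Fin t)) → u x = 0 := by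
      intro x _ hx
      simp only [Finset.mem_insert, Finset.mem_singleton] at hx
      push_neg at hx
      simp [hu, hx.1, hx.2]
    have husum : ∑ i, u i = 2 * k := by
      rw [← Finset.sum_subset (Finset.subset_univ ({p, q} : Finset (Fin t))) hzero,
        Finset.sum_pair hq.symm, hup, huq]
      omega
    have husum2 : ∑ i, u i / 2 = k - 1 := by
      rw [← Finset.sum_subset (Finset.subset_univ ({p, q} : Finset (Fin t)))
        (fun x h1 h2 => by rw [hzero x h1 h2]; rfl),
        Finset.sum_pair hq.symm, hup, huq]
      omega
    apply core ht0 n k hkpos u ?_ (by omega) (by omega) (by omega)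
    intro i
    rcases Decidable.em (i = p) with h | h
    · subst h; rw [hup]; omega
    rcases Decidable.em (i = q) with h2 | h2
    · subst h2; rw [huq]; exact hn _
    · rw [hzero i (Finset.mem_univ i) (by simp [h, h2])]
      exact Nat.zero_le _
  · push_neg at hbig
    set o : Fin t → ℕ := fun i => 2 * ((n i + 1) / 2) - 1 with ho
    have ho1 : ∀ i, 1 ≤ o i ∧ o i ≤ n i ∧ 2 * (o i / 2) + 1 = o i := by
      intro i; have := hn i; simp only [ho]; omega
    have hosum : (∑ i, o i) + t = 2 * s := by
      calc (∑ i, o i) + t = ∑ i, (o i + 1) := by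
            rw [Finset.sum_add_distrib, Finset.sum_const, Finset.card_univ,
              Fintype.card_fin, smul_eq_mul, mul_one]
        _ = ∑ i, 2 * ((n i + 1) / 2) := Finset.sum_congr rfl (fun i _ => by
            have := hn i; simp only [ho]; omega)
        _ = 2 * s := by rw [hs, Finset.mul_sum]
    have hosum2 : (∑ i, o i / 2) + t = s := by
      calc (∑ i, o i / 2) + t = ∑ i, (o i / 2 + 1) := by
            rw [Finset.sum_add_distrib, Finset.sum_const, Finset.card_univ,
              Fintype.card_fin, smul_eq_mul, mul_one]
        _ = ∑ i, (n i + 1) / 2 := Finset.sum_congr rfl (fun i _ => by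
            have := hn i; simp only [ho]; omega)
        _ = s := hs.symm
    have hts : t ≤ s := by
      rw [hs]
      calc t = ∑ _i : Fin t, 1 := by simp
        _ ≤ ∑ i, (n i + 1) / 2 := Finset.sum_le_sum (fun i _ => by have := hn i; omega)
    by_cases hM : ∑ i, o i ≤ 2 * k
    · exact core ht0 n k hkpos o (fun i => (ho1 i).2.1) (by omega) (by omega) (by omega)
    · push_neg at hM
      obtain ⟨F, hF, hFmin⟩ := Finset.exists_min_image
        ((Finset.univ : Finset (Finset (Fin t))).filter (fun F => 2 * k ≤ ∑ i ∈ F, o i))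
        (fun F => ∑ i ∈ F, o i)
        ⟨Finset.univ, by simp; omega⟩
      rw [Finset.mem_filter] at hF
      have hF2k : 2 * k ≤ ∑ i ∈ F, o i := hF.2
      have hFne : F.Nonempty := by
        rcases F.eq_empty_or_nonempty with h | h
        · rw [h, Finset.sum_empty] at hF2k; omega
        · exact h
      obtain ⟨e, he⟩ := hFne
      set E := F.erase e with hE
      have heE : e ∉ E := Finset.notMem_erase e F
      have hEsum : ∑ i ∈ E, o i + o e = ∑ i ∈ F, o i := Finset.sum_erase_add F _ he
      have hElt : ∑ i ∈ E, o i < 2 * k := by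
        by_contra hcon
        push_neg at hcon
        have h1 := hFmin E (Finset.mem_filter.2 ⟨Finset.mem_univ _, hcon⟩)
        have h2 := (ho1 e).1
        omega
      set r := 2 * k - ∑ i ∈ E, o i with hr
      have hre : r ≤ o e := by omega
      have hrpos : 1 ≤ r := by omega
      have hEne : E.Nonempty := by
        rcases E.eq_empty_or_nonempty with h | h
        · exfalso
          rw [h, Finset.sum_empty] at hEsum
          have h2 := hbig e
          have h3 := (ho1 e).2.1
          omega
        · exact h
      set u : Fin t → ℕ := fun i => if i ∈ E then o i else if i = e then r else 0 with hu
      have hue : u e = r := by simp [hu, heE]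
      have huE : ∀ i ∈ E, u i = o i := fun i hi => by simp [hu, hi]
      have hu0 : ∀ i, i ∉ E → i ≠ e → u i = 0 := fun i h1 h2 => by simp [hu, h1, h2]
      have husum : ∑ i, u i = 2 * k := by
        have h1 : ∑ i, u i = ∑ i ∈ insert e E, u i :=
          (Finset.sum_subset (Finset.subset_univ _) (fun x _ hx => by
            simp only [Finset.mem_insert] at hx
            push_neg at hx
            exact hu0 x hx.2 hx.1)).symm
        have h5 : ∑ i ∈ E, u i = ∑ i ∈ E, o i := Finset.sum_congr rfl (fun i hi => huE i hi)
        rw [h1, Finset.sum_insert heE, hue, h5]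
        omega
      have h1 : ∑ i, u i / 2 = r / 2 + ∑ i ∈ E, u i / 2 := by
        have h1' : ∑ i, u i / 2 = ∑ i ∈ insert e E, u i / 2 :=
          (Finset.sum_subset (Finset.subset_univ _) (fun x _ hx => by
            simp only [Finset.mem_insert] at hx
            push_neg at hx
            rw [hu0 x hx.2 hx.1]; rfl)).symm
        rw [h1', Finset.sum_insert heE, hue]
      have h2 : 2 * (∑ i ∈ E, u i / 2) + E.card = ∑ i ∈ E, o i := by
        calc 2 * (∑ i ∈ E, u i / 2) + E.card = ∑ i ∈ E, (2 * (u i / 2) + 1) := by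
              rw [Finset.sum_add_distrib, Finset.sum_const, Finset.mul_sum, smul_eq_mul, mul_one]
          _ = ∑ i ∈ E, o i := Finset.sum_congr rfl (fun i hi => by
              rw [huE i hi]; exact (ho1 i).2.2)
      have h3 : r / 2 * 2 ≤ r := Nat.div_mul_le_self r 2
      have h4 : 1 ≤ E.card := Finset.card_pos.2 hEne
      apply core ht0 n k hkpos u ?_ (by omega) (by omega) (by omega)
      intro i
      rcases Decidable.em (i ∈ E) with h | h
      · rw [huE i h]; exact (ho1 i).2.1
      rcases Decidable.em (i = e) with h5 | h5
      · subst h5; rw [hue]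
        exact hre.trans (ho1 i).2.1
      · rw [hu0 i h h5]; exact Nat.zero_le _

lemma choosable_succ_card {V : Type*} [Fintype V] (G : SimpleGraph V) :
    ProportionallyChoosable G (Fintype.card V + 1) := by
  classical
  intro L hL
  have hall : ∀ A : Finset V, A.card ≤ (A.biUnion L).card := by
    intro A
    rcases A.eq_empty_or_nonempty with rfl | ⟨v, hv⟩
    · simp
    · calc A.card ≤ Fintype.card V := Finset.card_le_univ A
        _ ≤ (L v).card := by rw [hL v]; omega
        _ ≤ (A.biUnion L).card :=
            Finset.card_le_card (fun c hc => Finset.mem_biUnion.2 ⟨v, hv, hc⟩)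
  obtain ⟨f, hfinj, hfmem⟩ := (Finset.all_card_le_biUnion_card_iff_exists_injective L).1 hall
  refine ⟨f, ⟨hfmem, fun u w hadj h => hadj.ne (hfinj h)⟩, ?_⟩
  intro c hc
  set k := Fintype.card V + 1 with hk
  have hmle : mult L c ≤ Fintype.card V := by
    rw [mult, ← Finset.card_univ]
    exact Finset.card_filter_le _ _
  have hmpos : 1 ≤ mult L c := by
    obtain ⟨v, -, hv⟩ := Finset.mem_biUnion.1 hc
    exact Finset.card_pos.2 ⟨v, Finset.mem_filter.2 ⟨Finset.mem_univ v, hv⟩⟩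
  have h0 : mult L c / k = 0 := Nat.div_eq_of_lt (by omega)
  have h1 : (mult L c + k - 1) / k = 1 := by
    apply Nat.div_eq_of_lt_le <;> omega
  have hle1 : (Finset.univ.filter (fun v => f v = c)).card ≤ 1 := by
    apply Finset.card_le_one.2
    intro a ha b hb
    rw [Finset.mem_filter] at ha hb
    exact hfinj (ha.2.trans hb.2.symm)
  rcases Nat.le_one_iff_eq_zero_or_eq_one.1 hle1 with h | h
  · left; rw [h, h0]
  · right; rw [h, h1]


/-- For a complete `t`-partite graph with `t ≥ 2` and parts of sizes
`n i ≥ 1`, letting `s = ∑ ⌈nᵢ/2⌉`, the graph is not proportionally `(s-1)`-choosable,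
so its proportional choice number is at least `s`. -/
theorem stmt8 (t : ℕ) (ht : 2 ≤ t) (n : Fin t → ℕ) (hn : ∀ i, 1 ≤ n i)
    (s : ℕ) (hs : s = ∑ i, (n i + 1) / 2) :
    ¬ ProportionallyChoosable (completeMultipartiteGraph (fun i : Fin t => Fin (n i))) (s - 1) ∧
      s ≤ propChoiceNumber (completeMultipartiteGraph (fun i : Fin t => Fin (n i))) := by
  have hs2 : 2 ≤ s := by
    rw [hs]
    calc 2 ≤ t := ht
      _ = ∑ _i : Fin t, 1 := by simp
      _ ≤ ∑ i, (n i + 1) / 2 := Finset.sum_le_sum (fun i _ => by have := hn i; omega)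
  constructor
  · exact not_choosable ht n hn (s - 1) (by rw [← hs]; omega)
  · rw [propChoiceNumber]
    refine le_csInf ⟨Fintype.card ((i : Fin t) × Fin (n i)) + 1,
      choosable_succ_card (completeMultipartiteGraph (fun i : Fin t => Fin (n i)))⟩ ?_
    intro b hb
    by_contra hlt
    push_neg at hlt
    exact not_choosable ht n hn b (by rw [← hs]; omega) hb
end

section
/- Let t ≥ 2, let n_1,…,n_t be even positive integers, and let s = Σ_{i=1}^t n_i/2. If max_i n_i ≤ s, then the complete multipartite graph K_{n_1,…,n_t} is not proportionally s-choosable; hence χ_pc(K_{n_1,…,n_t}) ≥ 1 + Σ_{i=1}^t n_i/2. -/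
open Finset SimpleGraph

section AuxStmt9

lemma count_eq_two {k cnt m : ℕ} (hk : 1 ≤ k) (hm : m = 2 * k)
    (h : cnt = m / k ∨ cnt = (m + k - 1) / k) : cnt = 2 := by
  subst hm
  have h1 : 2 * k / k = 2 := Nat.mul_div_cancel 2 (by omega)
  have h2 : (2 * k + k - 1) / k = 2 := by
    have e : 2 * k + k - 1 = (k - 1) + k * 2 := by omega
    rw [e, Nat.add_mul_div_left _ _ (by omega : 0 < k), Nat.div_eq_of_lt (by omega)]
  rcases h with h | h <;> omega

lemma count_le_one {k cnt m : ℕ} (hk : 1 ≤ k) (hm1 : 1 ≤ m) (hm : m ≤ k)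
    (h : cnt = m / k ∨ cnt = (m + k - 1) / k) : cnt ≤ 1 := by
  have h1 : m / k < 2 := Nat.div_lt_of_lt_mul (by omega)
  have h2 : (m + k - 1) / k < 2 := Nat.div_lt_of_lt_mul (by omega)
  rcases h with h | h <;> omega

variable {t : ℕ} {n : Fin t → ℕ}

lemma card_part (i : Fin t) :
    (Finset.univ.filter (fun v : Σ j, Fin (n j) => v.1 = i)).card = n i := by
  rw [Finset.card_filter, ← Finset.univ_sigma_univ, Finset.sum_sigma]
  simp [apply_ite Finset.card]

lemma even_fiber (f : (Σ j, Fin (n j)) → ℕ)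
    (hproper : ∀ ⦃u w : Σ j, Fin (n j)⦄,
      (completeMultipartiteGraph fun i : Fin t => Fin (n i)).Adj u w → f u ≠ f w)
    {c : ℕ} (h2 : (Finset.univ.filter fun v => f v = c).card = 2) (i : Fin t) :
    Even ((Finset.univ.filter fun v : Σ j, Fin (n j) => v.1 = i ∧ f v = c).card) := by
  obtain ⟨u, w, huw, hset⟩ := Finset.card_eq_two.mp h2
  have hu : f u = c := by
    have : u ∈ Finset.univ.filter fun v => f v = c := by rw [hset]; simp
    simpa using this
  have hw : f w = c := by
    have : w ∈ Finset.univ.filter fun v => f v = c := by rw [hset]; simp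
    simpa using this
  have hfst : u.1 = w.1 := by
    by_contra hne
    exact hproper (by simpa using hne) (hu.trans hw.symm)
  have key : (Finset.univ.filter fun v : Σ j, Fin (n j) => v.1 = i ∧ f v = c)
      = ({u, w} : Finset _).filter (fun v => v.1 = i) := by
    ext v
    simp only [mem_filter, mem_univ, true_and, mem_insert, mem_singleton]
    constructor
    · rintro ⟨hi, hc⟩
      have : v ∈ Finset.univ.filter fun v => f v = c := by simp [hc]
      rw [hset] at this
      simp only [mem_insert, mem_singleton] at this
      exact ⟨this, hi⟩
    · rintro ⟨hv, hi⟩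
      refine ⟨hi, ?_⟩
      rcases hv with rfl | rfl
      · exact hu
      · exact hw
  rw [key]
  by_cases hi : u.1 = i
  · rw [Finset.filter_eq_self.mpr]
    · rw [Finset.card_insert_of_notMem (by simpa using huw), Finset.card_singleton]
      exact ⟨1, rfl⟩
    · intro v hv
      rcases Finset.mem_insert.mp hv with rfl | hv
      · exact hi
      · rw [Finset.mem_singleton.mp hv, ← hfst]; exact hi
  · rw [Finset.filter_eq_empty_iff.mpr]
    · simp
    · intro v hv
      rcases Finset.mem_insert.mp hv with rfl | hv
      · exact hi
      · rw [Finset.mem_singleton.mp hv, ← hfst]; exact hi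

lemma notChoosableA {t : ℕ} {n : Fin t → ℕ} (k : ℕ) (hk : 1 ≤ k)
    (A : Finset (Σ i : Fin t, Fin (n i))) (hA : A.card = 2 * k) (i0 : Fin t)
    (hodd : Odd ((A.filter fun v => v.1 = i0).card)) :
    ¬ ProportionallyChoosable (completeMultipartiteGraph fun i : Fin t => Fin (n i)) k := by
  intro hch
  set L : (Σ i : Fin t, Fin (n i)) → Finset ℕ :=
    fun v => if v ∈ A then Finset.range k else Finset.Ico k (2 * k) with hLdef
  have hKA : IsKAssignment L k := by
    intro v
    by_cases hv : v ∈ A <;> simp [hLdef, hv, Nat.card_Ico] <;> omega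
  obtain ⟨f, ⟨hmem, hproper⟩, hcount⟩ := hch L hKA
  obtain ⟨a₀, ha₀⟩ : A.Nonempty := Finset.card_pos.mp (by omega)
  have h2 : ∀ c ∈ Finset.range k, (Finset.univ.filter fun v => f v = c).card = 2 := by
    intro c hc
    have hck : c < k := Finset.mem_range.mp hc
    have hfilt : (Finset.univ.filter fun v => c ∈ L v) = A := by
      ext v
      simp only [Finset.mem_filter, Finset.mem_univ, true_and]
      by_cases hv : v ∈ A <;> simp [hLdef, hv, Finset.mem_Ico, hck] <;> omega
    have hpal : c ∈ palette L := by
      simp only [palette, Finset.mem_biUnion]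
      exact ⟨a₀, Finset.mem_univ _, by simp [hLdef, ha₀, hck]⟩
    have hmc : mult L c = 2 * k := by rw [mult, hfilt, hA]
    exact count_eq_two hk hmc (hcount c hpal)
  -- decompose the active part of part i0 by colors
  have hfib : (A.filter fun v => v.1 = i0).card
      = ∑ c ∈ Finset.range k,
        (Finset.univ.filter fun v : Σ i : Fin t, Fin (n i) => v.1 = i0 ∧ f v = c).card := by
    rw [Finset.card_eq_sum_card_fiberwise
      (f := f) (t := Finset.range k)
      (fun v hv => by
        have hvA : v ∈ A := (Finset.mem_filter.mp hv).1
        have := hmem v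
        rw [hLdef] at this
        simpa [hvA] using this)]
    refine Finset.sum_congr rfl fun c hc => ?_
    congr 1
    ext v
    simp only [Finset.mem_filter, Finset.mem_univ, true_and]
    constructor
    · rintro ⟨⟨hvA, hi⟩, hfc⟩; exact ⟨hi, hfc⟩
    · rintro ⟨hi, hfc⟩
      have hvA : v ∈ A := by
        by_contra hvA
        have := hmem v
        rw [hLdef] at this
        simp only [hvA, if_false, Finset.mem_Ico] at this
        have hck : c < k := Finset.mem_range.mp hc
        omega
      exact ⟨⟨hvA, hi⟩, hfc⟩
  have heven : Even ((A.filter fun v => v.1 = i0).card) := by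
    rw [hfib]
    exact Finset.even_sum _ fun c hc => even_fiber f hproper (h2 c hc) i0
  rw [Nat.even_iff] at heven
  rw [Nat.odd_iff] at hodd
  omega

lemma notChoosableB {t : ℕ} (ht : 2 ≤ t) {n : Fin t → ℕ} (hn : ∀ i, 1 ≤ n i)
    (heven : ∀ i, Even (n i)) (s : ℕ) (hs : s = ∑ i, n i / 2) (hmax : ∀ i, n i ≤ s) :
    ¬ ProportionallyChoosable (completeMultipartiteGraph fun i : Fin t => Fin (n i)) s := by
  intro hch
  have hsum : ∑ i, n i = 2 * s := by
    rw [hs, Finset.mul_sum]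
    exact Finset.sum_congr rfl fun i _ => (Nat.mul_div_cancel' (heven i).two_dvd).symm
  have hs2 : 2 ≤ s := by
    have h1 : ∀ i, 1 ≤ n i / 2 := fun i => by
      have h := heven i; rw [Nat.even_iff] at h; have := hn i; omega
    calc (2:ℕ) ≤ t := ht
    _ = ∑ _i : Fin t, 1 := by simp
    _ ≤ ∑ i, n i / 2 := Finset.sum_le_sum fun i _ => h1 i
    _ = s := hs.symm
  have hcu : (Finset.univ : Finset (Σ i : Fin t, Fin (n i))).card = 2 * s := by
    rw [Finset.card_univ, Fintype.card_sigma]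
    simpa using hsum
  set L : (Σ i : Fin t, Fin (n i)) → Finset ℕ :=
    fun v => insert (s - 1 + (v.1 : ℕ)) (Finset.range (s - 1)) with hLdef
  have hKA : IsKAssignment L s := by
    intro v
    rw [hLdef]
    simp only []
    rw [Finset.card_insert_of_notMem (by simp), Finset.card_range]
    omega
  obtain ⟨f, ⟨hmem, hproper⟩, hcount⟩ := hch L hKA
  have hmemv : ∀ v : Σ i : Fin t, Fin (n i),
      f v ∈ insert (s - 1 + (v.1 : ℕ)) (Finset.range (s - 1)) := fun v => hmem v
  have h2 : ∀ c ∈ Finset.range (s - 1), (Finset.univ.filter fun v => f v = c).card = 2 := by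
    intro c hc
    have hck : c < s - 1 := Finset.mem_range.mp hc
    have hfilt : (Finset.univ.filter fun v => c ∈ L v) = Finset.univ := by
      apply Finset.filter_true_of_mem
      intro v _
      simp [hLdef, hck]
    have hpal : c ∈ palette L := by
      simp only [palette, Finset.mem_biUnion]
      exact ⟨⟨⟨0, by omega⟩, ⟨0, hn _⟩⟩, Finset.mem_univ _, by simp [hLdef, hck]⟩
    have hmc : mult L c = 2 * s := by rw [mult, hfilt, hcu]
    exact count_eq_two (by omega) hmc (hcount c hpal)
  have hpart : ∀ i : Fin t, n i
      = (Finset.univ.filter fun v : Σ j : Fin t, Fin (n j) =>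
          v.1 = i ∧ f v = s - 1 + (i : ℕ)).card
        + ∑ c ∈ Finset.range (s - 1),
          (Finset.univ.filter fun v : Σ j : Fin t, Fin (n j) => v.1 = i ∧ f v = c).card := by
    intro i
    have e1 : n i = ∑ b ∈ insert (s - 1 + (i : ℕ)) (Finset.range (s - 1)),
        ((Finset.univ.filter fun v : Σ j : Fin t, Fin (n j) => v.1 = i).filter
          fun v => f v = b).card := by
      rw [← card_part (n := n) i]
      refine Finset.card_eq_sum_card_fiberwise fun v hv => ?_
      have hvi : v.1 = i := (Finset.mem_filter.mp hv).2
      have h := hmemv v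
      rw [hvi] at h
      exact h
    rw [Finset.sum_insert (by simp)] at e1
    simpa only [Finset.filter_filter] using e1
  have hspec : ∀ i : Fin t,
      (Finset.univ.filter fun v : Σ j : Fin t, Fin (n j) =>
        v.1 = i ∧ f v = s - 1 + (i : ℕ)).card = 0 := by
    intro i
    have hglob : (Finset.univ.filter fun v : Σ j : Fin t, Fin (n j) =>
        f v = s - 1 + (i : ℕ)).card
        = (Finset.univ.filter fun v : Σ j : Fin t, Fin (n j) =>
            v.1 = i ∧ f v = s - 1 + (i : ℕ)).card := by
      congr 1
      ext v
      simp only [Finset.mem_filter, Finset.mem_univ, true_and]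
      constructor
      · intro hfv
        refine ⟨?_, hfv⟩
        have h := hmemv v
        rw [hfv] at h
        rcases Finset.mem_insert.mp h with h | h
        · have : (i : ℕ) = (v.1 : ℕ) := by omega
          exact (Fin.val_inj.mp this).symm
        · exact absurd (Finset.mem_range.mp h) (by omega)
      · exact fun h => h.2
    have hfilt : (Finset.univ.filter fun v : Σ j : Fin t, Fin (n j) =>
        (s - 1 + (i : ℕ)) ∈ L v)
        = Finset.univ.filter fun v : Σ j : Fin t, Fin (n j) => v.1 = i := by
      ext v
      simp only [Finset.mem_filter, Finset.mem_univ, true_and, hLdef,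
        Finset.mem_insert, Finset.mem_range]
      constructor
      · rintro (h | h)
        · have : (i : ℕ) = (v.1 : ℕ) := by omega
          exact (Fin.val_inj.mp this).symm
        · omega
      · rintro rfl
        exact Or.inl rfl
    have hmc : mult L (s - 1 + (i : ℕ)) = n i := by rw [mult, hfilt, card_part]
    have hpal : s - 1 + (i : ℕ) ∈ palette L := by
      simp only [palette, Finset.mem_biUnion]
      exact ⟨⟨i, ⟨0, hn _⟩⟩, Finset.mem_univ _, by simp [hLdef]⟩
    have hcnt := hcount _ hpal
    rw [hmc, hglob] at hcnt
    have hle := count_le_one (by omega : 1 ≤ s) (hn i) (hmax i) hcnt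
    have hterms : Even (∑ c ∈ Finset.range (s - 1),
        (Finset.univ.filter fun v : Σ j : Fin t, Fin (n j) => v.1 = i ∧ f v = c).card) :=
      Finset.even_sum _ fun c hc => even_fiber f hproper (h2 c hc) i
    have hni := heven i
    have hpi := hpart i
    rw [Nat.even_iff] at hterms hni
    omega
  have htot : ∑ i, n i = ∑ c ∈ Finset.range (s - 1), ∑ i : Fin t,
      (Finset.univ.filter fun v : Σ j : Fin t, Fin (n j) => v.1 = i ∧ f v = c).card := by
    calc ∑ i, n i = ∑ i : Fin t, ∑ c ∈ Finset.range (s - 1),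
        (Finset.univ.filter fun v : Σ j : Fin t, Fin (n j) => v.1 = i ∧ f v = c).card :=
      Finset.sum_congr rfl fun i _ => by rw [hpart i, hspec i, zero_add]
    _ = _ := Finset.sum_comm
  have hcol : ∀ c ∈ Finset.range (s - 1), ∑ i : Fin t,
      (Finset.univ.filter fun v : Σ j : Fin t, Fin (n j) => v.1 = i ∧ f v = c).card = 2 := by
    intro c hc
    rw [← h2 c hc]
    rw [Finset.card_eq_sum_card_fiberwise
      (s := Finset.univ.filter fun v : Σ j : Fin t, Fin (n j) => f v = c)
      (f := fun v => v.1) (t := Finset.univ) (fun v _ => Finset.mem_univ _)]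
    refine Finset.sum_congr rfl fun i _ => ?_
    rw [Finset.filter_filter]
    congr 1
    ext v
    simp only [Finset.mem_filter]
    tauto
  rw [Finset.sum_congr rfl hcol, Finset.sum_const, Finset.card_range, smul_eq_mul] at htot
  omega

lemma choosableBig {V : Type*} [Fintype V] (G : SimpleGraph V) (k : ℕ)
    (hk : Fintype.card V < k) : ProportionallyChoosable G k := by
  intro L hL
  have hall : ∀ S : Finset V, S.card ≤ (S.biUnion L).card := by
    intro S
    rcases S.eq_empty_or_nonempty with rfl | ⟨v, hv⟩
    · simp
    · calc S.card ≤ Fintype.card V := by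
            rw [← Finset.card_univ]; exact Finset.card_le_univ S
      _ ≤ k := le_of_lt hk
      _ = (L v).card := (hL v).symm
      _ ≤ (S.biUnion L).card :=
        Finset.card_le_card (Finset.subset_biUnion_of_mem L hv)
  obtain ⟨f, hinj, hmem⟩ := (Finset.all_card_le_biUnion_card_iff_exists_injective L).mp hall
  refine ⟨f, ⟨hmem, fun u w huw h => G.ne_of_adj huw (hinj h)⟩, fun c hc => ?_⟩
  have hmult1 : 1 ≤ mult L c := by
    obtain ⟨v, -, hv⟩ := Finset.mem_biUnion.mp hc
    exact Finset.card_pos.mpr ⟨v, by simp [mult, hv]⟩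
  have hmultk : mult L c < k :=
    lt_of_le_of_lt (le_trans (Finset.card_le_univ _) (le_of_eq Finset.card_univ)) hk
  have hcard : (Finset.univ.filter (fun v => f v = c)).card ≤ 1 := by
    refine Finset.card_le_one.mpr fun a ha b hb => hinj ?_
    simp only [Finset.mem_filter] at ha hb
    rw [ha.2, hb.2]
  have hk0 : 0 < k := by omega
  rcases Nat.le_one_iff_eq_zero_or_eq_one.mp hcard with h0 | h1
  · left; rw [h0, Nat.div_eq_of_lt hmultk]
  · right
    rw [h1]
    have a1 : 1 ≤ (mult L c + k - 1) / k := (Nat.le_div_iff_mul_le hk0).mpr (by omega)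
    have a2 : (mult L c + k - 1) / k < 2 := Nat.div_lt_of_lt_mul (by omega)
    omega


/-- For `t ≥ 2` and even part sizes `n i ≥ 1` with `s = ∑ nᵢ/2` and
`max nᵢ ≤ s`, the complete multipartite graph is not proportionally `s`-choosable,
so `χ_pc ≥ 1 + s`. -/
theorem stmt9 (t : ℕ) (ht : 2 ≤ t) (n : Fin t → ℕ) (hn : ∀ i, 1 ≤ n i)
    (heven : ∀ i, Even (n i)) (s : ℕ) (hs : s = ∑ i, n i / 2)
    (hmax : ∀ i, n i ≤ s) :
    ¬ ProportionallyChoosable (completeMultipartiteGraph (fun i : Fin t => Fin (n i))) s ∧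
      1 + s ≤ propChoiceNumber (completeMultipartiteGraph (fun i : Fin t => Fin (n i))) := by
  have hsum : ∑ i, n i = 2 * s := by
    rw [hs, Finset.mul_sum]
    exact Finset.sum_congr rfl fun i _ => (Nat.mul_div_cancel' (heven i).two_dvd).symm
  have hs2 : 2 ≤ s := by
    have h1 : ∀ i, 1 ≤ n i / 2 := fun i => by
      have h := heven i; rw [Nat.even_iff] at h; have := hn i; omega
    calc (2:ℕ) ≤ t := ht
    _ = ∑ _i : Fin t, 1 := by simp
    _ ≤ ∑ i, n i / 2 := Finset.sum_le_sum fun i _ => h1 i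
    _ = s := hs.symm
  have hcV : Fintype.card (Σ i : Fin t, Fin (n i)) = 2 * s := by
    rw [Fintype.card_sigma]; simpa using hsum
  have hnotS := notChoosableB ht hn heven s hs hmax
  refine ⟨hnotS, ?_⟩
  refine le_csInf ⟨2 * s + 1, ?_⟩ ?_
  · show ProportionallyChoosable _ _
    exact choosableBig _ (2 * s + 1) (by rw [hcV]; omega)
  intro b hb
  replace hb : ProportionallyChoosable _ b := hb
  by_contra hlt
  push_neg at hlt
  have hble : b ≤ s := by omega
  rcases eq_or_lt_of_le hble with rfl | hblt
  · exact hnotS hb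
  rcases Nat.eq_zero_or_pos b with rfl | hb1
  · obtain ⟨f, ⟨hmem, -⟩, -⟩ := hb (fun _ => (∅ : Finset ℕ)) (fun _ => rfl)
    exact absurd (hmem ⟨⟨0, by omega⟩, ⟨0, hn _⟩⟩) (Finset.notMem_empty _)
  -- 1 ≤ b < s : build the active set A
  set i0 : Fin t := ⟨0, by omega⟩ with hi0
  have hP0 : (Finset.univ.filter fun v : Σ i : Fin t, Fin (n i) => v.1 = i0).card = n i0 :=
    card_part i0
  set a0 : ℕ := if 2 * b - 1 ≤ n i0 then 2 * b - 1 else n i0 - 1 with ha0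
  have hni0even := heven i0
  rw [Nat.even_iff] at hni0even
  have hni0 : 1 ≤ n i0 := hn i0
  have ha0odd : a0 % 2 = 1 := by
    rw [ha0]; split <;> omega
  have ha0le : a0 ≤ n i0 := by rw [ha0]; split <;> omega
  have ha0le2 : a0 ≤ 2 * b - 1 := by rw [ha0]; split <;> omega
  obtain ⟨S0, hS0sub, hS0card⟩ :=
    Finset.exists_subset_card_eq (s := Finset.univ.filter fun v : Σ i : Fin t, Fin (n i) => v.1 = i0) (n := a0)
      (by rw [hP0]; exact ha0le)
  have hQcard : (Finset.univ.filter fun v : Σ i : Fin t, Fin (n i) => ¬ v.1 = i0).card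
      = 2 * s - n i0 := by
    have := Finset.card_filter_add_card_filter_not
      (s := (Finset.univ : Finset (Σ i : Fin t, Fin (n i)))) (p := fun v => v.1 = i0)
    rw [hP0, Finset.card_univ, hcV] at this
    omega
  have hmaxi0 : n i0 ≤ s := hmax i0
  have hkey : 2 * b - a0 ≤ 2 * s - n i0 := by
    rw [ha0]; split <;> omega
  obtain ⟨B, hBsub, hBcard⟩ :=
    Finset.exists_subset_card_eq (s := Finset.univ.filter fun v : Σ i : Fin t, Fin (n i) => ¬ v.1 = i0)
      (n := 2 * b - a0) (by rw [hQcard]; exact hkey)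
  have hdisj : Disjoint S0 B := by
    rw [Finset.disjoint_left]
    intro v hvS hvB
    have h1 : v.1 = i0 := (Finset.mem_filter.mp (hS0sub hvS)).2
    have h2 : ¬ v.1 = i0 := (Finset.mem_filter.mp (hBsub hvB)).2
    exact h2 h1
  have hAcard : (S0 ∪ B).card = 2 * b := by
    rw [Finset.card_union_of_disjoint hdisj, hS0card, hBcard]; omega
  have hAfilt : (S0 ∪ B).filter (fun v => v.1 = i0) = S0 := by
    ext v
    simp only [Finset.mem_filter, Finset.mem_union]
    constructor
    · rintro ⟨h | h, hi⟩
      · exact h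
      · exact absurd hi (Finset.mem_filter.mp (hBsub h)).2
    · intro h
      exact ⟨Or.inl h, (Finset.mem_filter.mp (hS0sub h)).2⟩
  exact notChoosableA b hb1 (S0 ∪ B) hAcard i0
    (by rw [hAfilt, hS0card, Nat.odd_iff]; exact ha0odd) hb

end AuxStmt9
end

section
/- If G = K_{n_1,…,n_t} with t ≥ 2 where each n_i is odd, and s = Σ_{i=1}^t (n_i+1)/2, then |V(G)| = 2s − t ≤ 2(s−1), and G is not equitably (s−1)-colorable. -/
open Finset SimpleGraph

/-- If each part size `n i` is odd, `t ≥ 2`, and `s = ∑ (nᵢ+1)/2`, then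
the complete `t`-partite graph has `2s - t ≤ 2(s-1)` vertices and is not equitably
`(s-1)`-colorable. -/
theorem stmt10 (t : ℕ) (ht : 2 ≤ t) (n : Fin t → ℕ) (hodd : ∀ i, Odd (n i))
    (s : ℕ) (hs : s = ∑ i, (n i + 1) / 2) :
    Fintype.card (Σ i : Fin t, Fin (n i)) = 2 * s - t ∧
      2 * s - t ≤ 2 * (s - 1) ∧
      ¬ EquitablyColorable (completeMultipartiteGraph (fun i : Fin t => Fin (n i))) (s - 1) := by
  have hs2 : ∀ i, (n i + 1) / 2 * 2 = n i + 1 := by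
    intro i
    obtain ⟨m, hm⟩ := hodd i
    omega
  have h2s : 2 * s = (∑ i, n i) + t := by
    have h : 2 * s = ∑ i, (n i + 1) := by
      rw [hs, Finset.mul_sum]
      refine Finset.sum_congr rfl fun i _ => ?_
      have := hs2 i; omega
    rw [h, Finset.sum_add_distrib]
    simp [mul_comm]
  have hst : t ≤ s := by
    rw [hs]
    calc t = ∑ _i : Fin t, 1 := by simp
    _ ≤ _ := Finset.sum_le_sum (fun i _ => by have := hs2 i; omega)
  have hcard : Fintype.card (Σ i : Fin t, Fin (n i)) = 2 * s - t := by
    simp only [Fintype.card_sigma, Fintype.card_fin]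
    omega
  refine ⟨hcard, by omega, ?_⟩
  rintro ⟨f, hprop, heq⟩
  -- monochromatic vertices are in the same part
  have hmono : ∀ v w : (Σ i : Fin t, Fin (n i)), f v = f w → v.1 = w.1 := by
    intro v w h
    by_contra hne
    exact hprop (by simpa using hne) h
  have htotal : ∑ c : Fin (s - 1),
      (Finset.univ.filter (fun v => f v = c)).card = 2 * s - t := by
    rw [← hcard, ← Finset.card_univ, Finset.card_eq_sum_card_fiberwise
      (f := f) (t := Finset.univ) (fun v _ => Finset.mem_univ _)]
  by_cases hbig : ∃ c, 3 ≤ (Finset.univ.filter (fun v => f v = c)).card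
  · obtain ⟨c₀, hc₀⟩ := hbig
    have hall : ∀ c : Fin (s - 1),
        2 ≤ (Finset.univ.filter (fun v => f v = c)).card := by
      intro c
      have := heq c₀ c
      omega
    have hge : 2 * s - 1 ≤ ∑ c : Fin (s - 1),
        (Finset.univ.filter (fun v => f v = c)).card := by
      rw [← Finset.sum_erase_add _ _ (Finset.mem_univ c₀)]
      have hk1 : 1 ≤ s - 1 := c₀.pos
      have h1 : 2 * (s - 1 - 1) ≤ ∑ c ∈ Finset.univ.erase c₀,
          (Finset.univ.filter (fun v => f v = c)).card := by
        calc 2 * (s - 1 - 1) = ∑ _c ∈ Finset.univ.erase c₀, 2 := by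
              simp [Finset.card_erase_of_mem, mul_comm]
        _ ≤ _ := Finset.sum_le_sum (fun c _ => hall c)
      omega
    omega
  · push_neg at hbig
    have hbig' : ∀ c, (Finset.univ.filter (fun v => f v = c)).card ≤ 2 :=
      fun c => by have := hbig c; omega
    have hSi : ∀ i, (n i + 1) / 2 ≤
        ((Finset.univ.filter (fun v : Σ i : Fin t, Fin (n i) => v.1 = i)).image f).card := by
      intro i
      have hPcard :
          (Finset.univ.filter (fun v : Σ i : Fin t, Fin (n i) => v.1 = i)).card = n i := by
        have h : (Finset.univ.filter (fun v : Σ i : Fin t, Fin (n i) => v.1 = i))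
            = (Finset.univ : Finset (Fin (n i))).map
              ⟨Sigma.mk i, sigma_mk_injective⟩ := by
          apply Finset.ext
          rintro ⟨j, x⟩
          simp only [Finset.mem_filter, Finset.mem_univ, true_and, Finset.mem_map,
            Function.Embedding.coeFn_mk]
          constructor
          · rintro rfl; exact ⟨x, rfl⟩
          · rintro ⟨y, h⟩
            exact (congrArg Sigma.fst h).symm
        simp [h]
      have hfib : (Finset.univ.filter (fun v : Σ i : Fin t, Fin (n i) => v.1 = i)).card
          = ∑ c ∈ (Finset.univ.filter (fun v : Σ i : Fin t, Fin (n i) => v.1 = i)).image f,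
            ((Finset.univ.filter (fun v : Σ i : Fin t, Fin (n i) => v.1 = i)).filter
              (fun v => f v = c)).card :=
        Finset.card_eq_sum_card_fiberwise (fun v hv => Finset.mem_image_of_mem f hv)
      have hle : ∀ c ∈ (Finset.univ.filter (fun v : Σ i : Fin t, Fin (n i) => v.1 = i)).image f,
          ((Finset.univ.filter (fun v : Σ i : Fin t, Fin (n i) => v.1 = i)).filter
            (fun v => f v = c)).card ≤ 2 := by
        intro c _
        refine le_trans (Finset.card_le_card ?_) (hbig' c)
        intro v hv
        simp only [Finset.mem_filter] at hv ⊢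
        exact ⟨Finset.mem_univ _, hv.2⟩
      have h2 : n i ≤ 2 *
          ((Finset.univ.filter (fun v : Σ i : Fin t, Fin (n i) => v.1 = i)).image f).card := by
        calc n i = _ := hPcard.symm
        _ = _ := hfib
        _ ≤ ∑ _c ∈ (Finset.univ.filter (fun v : Σ i : Fin t, Fin (n i) => v.1 = i)).image f, 2 :=
            Finset.sum_le_sum hle
        _ = _ := by rw [Finset.sum_const]; ring
      obtain ⟨m, hm⟩ := hodd i
      omega
    have hdisj : ∀ i ∈ (Finset.univ : Finset (Fin t)), ∀ j ∈ (Finset.univ : Finset (Fin t)),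
        i ≠ j → Disjoint
          ((Finset.univ.filter (fun v : Σ i : Fin t, Fin (n i) => v.1 = i)).image f)
          ((Finset.univ.filter (fun v : Σ i : Fin t, Fin (n i) => v.1 = j)).image f) := by
      intro i _ j _ hij
      rw [Finset.disjoint_left]
      intro c hci hcj
      simp only [Finset.mem_image, Finset.mem_filter, Finset.mem_univ, true_and] at hci hcj
      obtain ⟨v, hv, hvc⟩ := hci
      obtain ⟨w, hw, hwc⟩ := hcj
      exact hij (hv ▸ hw ▸ hmono v w (hvc.trans hwc.symm))
    have hsum : ∑ i, ((Finset.univ.filter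
        (fun v : Σ i : Fin t, Fin (n i) => v.1 = i)).image f).card ≤ s - 1 := by
      rw [← Finset.card_biUnion hdisj]
      exact le_trans (Finset.card_le_card (Finset.subset_univ _)) (by simp)
    have hfin : s ≤ ∑ i, ((Finset.univ.filter
        (fun v : Σ i : Fin t, Fin (n i) => v.1 = i)).image f).card := by
      calc s = ∑ i, (n i + 1) / 2 := hs
      _ ≤ _ := Finset.sum_le_sum (fun i _ => hSi i)
    omega
end
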